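/- arXiv:1404.0386 — 2 statements merged into one kernel-verified Lean document; each statement's English description precedes it below -/
import Mathlib

section
/- Let x ∈ I have continued fraction coefficients (a_j)_{j≥1}, let n ≥ 2 be even with Σ_{j=1}^n log a_j > 0, and let y ∈ I_n(x) \ I_{n+1}(x). Then ( (1/n) Σ_{j=1}^{⌈n/2⌉} log a_{2j-1} ) / ( (1/n) Σ_{j=1}^{n+3} log(a_j+1) + C_1(n)/n ) ≤ log|f_1(x)−f_1(y)| / log|x−y| ≤ ( (1/n) Σ_{j=1}^{⌈n/2⌉+3} log(a_{2j-1}+1) + C_2(n)/(2n) ) / ( (1/n) Σ_{j=1}^n log a_j ), where C_1(n) = (log 2)/2 + log max( (a_{n+2}+2)/(a_{n+2}+1), (a_{n+3}+2)/(a_{n+3}+1) ) and C_2(n) = (log 2)/2 + log max( (a_{2⌈n/2⌉+3}+2)/(a_{2⌈n/2⌉+3}+1), (a_{2⌈n/2⌉+5}+2)/(a_{2⌈n/2⌉+5}+1) ). -/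
open Filter Finset MeasureTheory

/-- `qden a n` is the denominator `q_n` of the continued fraction with partial
quotients `a_1 = a 0, a_2 = a 1, …` (0-indexed sequence `a`), defined by
`q_0 = 1`, `q_1 = a_1`, `q_n = a_n q_{n-1} + q_{n-2}`. -/
def qden (a : ℕ → ℕ+) : ℕ → ℕ
  | 0 => 1
  | 1 => a 0
  | (n+2) => (a (n+1) : ℕ) * qden a (n+1) + qden a n

/-- `pnum a n` is the numerator `p_n`, defined by `p_0 = 0`, `p_1 = 1`,
`p_n = a_n p_{n-1} + p_{n-2}`. -/
def pnum (a : ℕ → ℕ+) : ℕ → ℕ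
  | 0 => 0
  | 1 => 1
  | (n+2) => (a (n+1) : ℕ) * pnum a (n+1) + pnum a n

/-- The value `[a_1, a_2, …]` of the infinite continued fraction with partial quotients
`a_1 = a 0, a_2 = a 1, …`, i.e. the limit of the convergents `p_n / q_n` (which always
exists). -/
noncomputable def cfVal (a : ℕ → ℕ+) : ℝ :=
  limUnder atTop (fun n => (pnum a n : ℝ) / (qden a n : ℝ))

/-- The set `I` of irrational numbers of `[0,1]`. -/
def Iirr : Set ℝ := {x | x ∈ Set.Icc (0:ℝ) 1 ∧ Irrational x}

/-- The fundamental interval `I_n(x)` of rank `n` for `x = [a_1, a_2, …]`: the set of those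
irrationals `y = [b_1, b_2, …]` whose first `n` partial quotients agree with those of `x`. -/
def fundInt (a : ℕ → ℕ+) (n : ℕ) : Set ℝ :=
  {y | ∃ b : ℕ → ℕ+, cfVal b = y ∧ ∀ j < n, b j = a j}

/-- The (unique) sequence of partial quotients of `x`, when `x` has a continued
fraction expansion. -/
noncomputable def coeff (x : ℝ) : ℕ → ℕ+ := by
  classical
  exact if h : ∃ a : ℕ → ℕ+, cfVal a = x then h.choose else fun _ => 1

/-- First component of Cantor's bijection: `f₁([a_1,a_2,…]) = [a_1,a_3,a_5,…]`. -/
noncomputable def cantorF1 (x : ℝ) : ℝ := cfVal (fun j => coeff x (2*j))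

/-- Second component of Cantor's bijection: `f₂([a_1,a_2,…]) = [a_2,a_4,a_6,…]`. -/
noncomputable def cantorF2 (x : ℝ) : ℝ := cfVal (fun j => coeff x (2*j+1))

namespace CF

noncomputable def conv (a : ℕ → ℕ+) (k : ℕ) : ℝ := (pnum a k : ℝ) / (qden a k : ℝ)

variable (a : ℕ → ℕ+)

lemma qden_pos : ∀ k, 0 < qden a k
  | 0 => Nat.one_pos
  | 1 => (a 0).pos
  | (k+2) => by
      have h1 := qden_pos (k+1)
      have := (a (k+1)).pos
      show 0 < (a (k+1) : ℕ) * qden a (k+1) + qden a k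
      positivity

lemma qdenR_pos (k : ℕ) : (0:ℝ) < (qden a k : ℝ) := by exact_mod_cast qden_pos a k

lemma qden_le_succ : ∀ k, qden a k ≤ qden a (k+1)
  | 0 => by
      show 1 ≤ (a 0 : ℕ)
      exact (a 0).one_le
  | (k+1) => by
      have h1 := qden_pos a k
      have h2 := qden_pos a (k+1)
      have := (a (k+1)).one_le
      show qden a (k+1) ≤ (a (k+1) : ℕ) * qden a (k+1) + qden a k
      calc qden a (k+1) = 1 * qden a (k+1) + 0 := by ring
        _ ≤ (a (k+1) : ℕ) * qden a (k+1) + qden a k :=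
            Nat.add_le_add (Nat.mul_le_mul_right _ this) (Nat.zero_le _)

lemma qden_mono : Monotone (qden a) := monotone_nat_of_le_succ (qden_le_succ a)

lemma det : ∀ k, (pnum a (k+1) : ℤ) * (qden a k : ℤ) - (qden a (k+1) : ℤ) * (pnum a k : ℤ) = (-1)^k
  | 0 => by simp [pnum, qden]
  | (k+1) => by
      have ih := det k
      have hp : ((pnum a (k+2) : ℤ)) = (a (k+1) : ℤ) * (pnum a (k+1) : ℤ) + (pnum a k : ℤ) := by
        show ((((a (k+1) : ℕ) * pnum a (k+1) + pnum a k : ℕ)) : ℤ) = _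
        push_cast; ring
      have hq : ((qden a (k+2) : ℤ)) = (a (k+1) : ℤ) * (qden a (k+1) : ℤ) + (qden a k : ℤ) := by
        show ((((a (k+1) : ℕ) * qden a (k+1) + qden a k : ℕ)) : ℤ) = _
        push_cast; ring
      rw [hp, hq]
      have : (-1:ℤ)^(k+1) = -(-1)^k := by ring
      rw [this, ← ih]; ring

lemma detR (k : ℕ) : (pnum a (k+1) : ℝ) * (qden a k : ℝ) - (qden a (k+1) : ℝ) * (pnum a k : ℝ) = (-1)^k := by
  exact_mod_cast congrArg (Int.cast : ℤ → ℝ) (det a k)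

lemma conv_step (k : ℕ) : conv a (k+1) - conv a k = (-1)^k / ((qden a k : ℝ) * (qden a (k+1) : ℝ)) := by
  have h1 := qdenR_pos a k
  have h2 := qdenR_pos a (k+1)
  rw [conv, conv, div_sub_div _ _ (ne_of_gt h2) (ne_of_gt h1), div_eq_div_iff (by positivity) (by positivity)]
  have h := detR a k
  linear_combination ((qden a k : ℝ) * (qden a (k+1) : ℝ)) * h




variable (a : ℕ → ℕ+)

lemma qden_le_of_le {k m : ℕ} (h : k ≤ m) : qden a k ≤ qden a m := qden_mono a h

lemma qden_ge : ∀ k, k ≤ qden a k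
  | 0 => Nat.zero_le _
  | 1 => (a 0).one_le
  | (k+2) => by
      have ih := qden_ge (k+1)
      have h1 : 1 ≤ qden a k := qden_pos a k
      have := (a (k+1)).one_le
      show k+2 ≤ (a (k+1) : ℕ) * qden a (k+1) + qden a k
      calc k+2 ≤ 1 * qden a (k+1) + 1 := by omega
        _ ≤ (a (k+1) : ℕ) * qden a (k+1) + qden a k :=
            Nat.add_le_add (Nat.mul_le_mul_right _ this) h1

lemma prod_le_qden : ∀ k, (∏ j ∈ Finset.range k, (a j : ℕ)) ≤ qden a k
  | 0 => by simp [qden]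
  | 1 => by simp [qden]
  | (k+2) => by
      have ih := prod_le_qden (k+1)
      show _ ≤ (a (k+1) : ℕ) * qden a (k+1) + qden a k
      rw [Finset.prod_range_succ]
      calc (∏ j ∈ Finset.range (k+1), (a j : ℕ)) * (a (k+1) : ℕ)
          = (a (k+1) : ℕ) * (∏ j ∈ Finset.range (k+1), (a j : ℕ)) := by ring
        _ ≤ (a (k+1) : ℕ) * qden a (k+1) := Nat.mul_le_mul_left _ ih
        _ ≤ _ := Nat.le_add_right _ _

lemma qden_le_prod : ∀ k, qden a k ≤ ∏ j ∈ Finset.range k, ((a j : ℕ) + 1)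
  | 0 => by simp [qden]
  | 1 => by simp [qden]
  | (k+2) => by
      have ih := qden_le_prod (k+1)
      show (a (k+1) : ℕ) * qden a (k+1) + qden a k ≤ _
      rw [Finset.prod_range_succ]
      calc (a (k+1) : ℕ) * qden a (k+1) + qden a k
          ≤ (a (k+1) : ℕ) * qden a (k+1) + qden a (k+1) := by
            exact Nat.add_le_add_left (qden_le_succ a k) _
        _ = qden a (k+1) * ((a (k+1) : ℕ) + 1) := by ring
        _ ≤ _ := Nat.mul_le_mul_right _ ih

lemma qden_congr {b : ℕ → ℕ+} : ∀ k, (∀ j, j < k → b j = a j) → qden b k = qden a k ∧ pnum b k = pnum a k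
  | 0, _ => ⟨rfl, rfl⟩
  | 1, h => by
      have : b 0 = a 0 := h 0 Nat.zero_lt_one
      constructor <;> simp [qden, pnum, this]
  | (k+2), h => by
      have ih1 := qden_congr (k+1) (fun j hj => h j (hj.trans (Nat.lt_succ_self _)))
      have ih0 := qden_congr k (fun j hj => h j (hj.trans (by omega)))
      have hb : b (k+1) = a (k+1) := h (k+1) (by omega)
      constructor
      · show (b (k+1) : ℕ) * qden b (k+1) + qden b k = (a (k+1) : ℕ) * qden a (k+1) + qden a k
        rw [hb, ih1.1, ih0.1]
      · show (b (k+1) : ℕ) * pnum b (k+1) + pnum b k = (a (k+1) : ℕ) * pnum a (k+1) + pnum a k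
        rw [hb, ih1.2, ih0.2]




variable (a : ℕ → ℕ+)

lemma pnum_le_qden : ∀ k, pnum a k ≤ qden a k
  | 0 => Nat.zero_le _
  | 1 => (a 0).one_le
  | (k+2) => by
      have ih1 := pnum_le_qden (k+1)
      have ih0 := pnum_le_qden k
      show (a (k+1) : ℕ) * pnum a (k+1) + pnum a k ≤ (a (k+1) : ℕ) * qden a (k+1) + qden a k
      exact Nat.add_le_add (Nat.mul_le_mul_left _ ih1) ih0

lemma conv_mem (k : ℕ) : conv a k ∈ Set.Icc (0:ℝ) 1 := by
  constructor
  · apply div_nonneg (Nat.cast_nonneg _) (Nat.cast_nonneg _)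
  · rw [conv, div_le_one (qdenR_pos a k)]
    exact_mod_cast pnum_le_qden a k

lemma abs_conv_step (k : ℕ) : |conv a (k+1) - conv a k| = 1 / ((qden a k : ℝ) * (qden a (k+1) : ℝ)) := by
  rw [conv_step, abs_div, abs_pow, abs_neg, abs_one, one_pow]
  congr 1
  have h1 := qdenR_pos a k
  have h2 := qdenR_pos a (k+1)
  rw [abs_of_pos (by positivity : (0:ℝ) < (qden a k : ℝ) * (qden a (k+1) : ℝ))]

lemma dist_conv {k m : ℕ} (hk : 1 ≤ k) (h : k ≤ m) : |conv a m - conv a k| ≤ 1 / (k : ℝ) := by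
  have tel : conv a m - conv a k = ∑ j ∈ Finset.Ico k m, (conv a (j+1) - conv a j) := by
    rw [Finset.sum_Ico_eq_sub _ h, Finset.sum_range_sub (fun i => conv a i),
      Finset.sum_range_sub (fun i => conv a i)]
    ring
  rw [tel]
  calc |∑ j ∈ Finset.Ico k m, (conv a (j+1) - conv a j)|
      ≤ ∑ j ∈ Finset.Ico k m, |conv a (j+1) - conv a j| := Finset.abs_sum_le_sum_abs _ _
    _ ≤ ∑ j ∈ Finset.Ico k m, (1/(j:ℝ) - 1/((j:ℝ)+1)) := by
        apply Finset.sum_le_sum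
        intro j hj
        obtain ⟨hj1, hj2⟩ := Finset.mem_Ico.mp hj
        have hj' : 1 ≤ j := hk.trans hj1
        have hq1 : (j:ℝ) ≤ (qden a j : ℝ) := by exact_mod_cast qden_ge a j
        have hq2 : ((j:ℝ)+1) ≤ (qden a (j+1) : ℝ) := by exact_mod_cast qden_ge a (j+1)
        have hjpos : (0:ℝ) < j := by exact_mod_cast hj'
        rw [abs_conv_step]
        rw [div_sub_div _ _ (ne_of_gt hjpos) (by positivity), one_mul, mul_one]
        have : ((j:ℝ)+1) - (j:ℝ) = 1 := by ring
        rw [this]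
        apply one_div_le_one_div_of_le (by positivity)
        calc (j:ℝ) * ((j:ℝ)+1) ≤ (qden a j : ℝ) * ((j:ℝ)+1) := by
              apply mul_le_mul_of_nonneg_right hq1 (by positivity)
          _ ≤ (qden a j : ℝ) * (qden a (j+1) : ℝ) := by
              apply mul_le_mul_of_nonneg_left hq2 (le_of_lt (qdenR_pos a j))
    _ = 1/(k:ℝ) - 1/(m:ℝ) := by
        have : ∀ j : ℕ, (1/(j:ℝ) - 1/((j:ℝ)+1)) = (fun i : ℕ => -(1/(i:ℝ))) (j+1) - (fun i : ℕ => -(1/(i:ℝ))) j := by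
          intro j; push_cast; ring
        rw [Finset.sum_congr rfl (fun j _ => this j), Finset.sum_Ico_eq_sub _ h,
          Finset.sum_range_sub (fun i : ℕ => -(1/(i:ℝ))), Finset.sum_range_sub (fun i : ℕ => -(1/(i:ℝ)))]
        push_cast
        ring
    _ ≤ 1/(k:ℝ) := by
        have : (0:ℝ) ≤ 1/(m:ℝ) := by positivity
        linarith

lemma cauchy : CauchySeq (conv a) := by
  rw [Metric.cauchySeq_iff']
  intro ε hε
  obtain ⟨N, hN⟩ := exists_nat_gt (1/ε)
  refine ⟨max N 1, fun n hn => ?_⟩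
  have h1 : 1 ≤ max N 1 := le_max_right _ _
  rw [Real.dist_eq]
  calc |conv a n - conv a (max N 1)| ≤ 1 / ((max N 1 : ℕ) : ℝ) := dist_conv a h1 hn
    _ < ε := by
        have hNpos : (0:ℝ) < ((max N 1 : ℕ) : ℝ) := by exact_mod_cast h1
        rw [div_lt_iff₀ hNpos]
        have : (1/ε) < ((max N 1 : ℕ):ℝ) := by
          calc (1/ε) < N := hN
            _ ≤ ((max N 1 : ℕ):ℝ) := by exact_mod_cast le_max_left N 1
        calc (1:ℝ) = (1/ε) * ε := by field_simp
          _ < ((max N 1 : ℕ):ℝ) * ε := mul_lt_mul_of_pos_right this hε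
          _ = ε * ((max N 1 : ℕ):ℝ) := by ring
    
lemma tendsto_cfVal : Tendsto (conv a) atTop (nhds (cfVal a)) := by
  obtain ⟨L, hL⟩ := cauchySeq_tendsto_of_complete (cauchy a)
  have : cfVal a = L := hL.limUnder_eq
  rw [this]; exact hL


variable (a : ℕ → ℕ+)

lemma signed_step (k : ℕ) : (-1:ℝ)^k * (conv a (k+1) - conv a k) = 1 / ((qden a k : ℝ) * (qden a (k+1) : ℝ)) := by
  rw [conv_step]
  rw [← mul_div_assoc]
  rw [← pow_add, ← two_mul, pow_mul]
  norm_num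

lemma conv_between : ∀ d k, 0 ≤ (-1:ℝ)^k * (conv a (k+d) - conv a k) ∧
    (-1:ℝ)^k * (conv a (k+d) - conv a k) ≤ 1 / ((qden a k : ℝ) * (qden a (k+1) : ℝ)) := by
  intro d
  induction d with
  | zero =>
      intro k
      constructor
      · simp
      · simp
        positivity
  | succ d ih =>
      intro k
      obtain ⟨ih1, ih2⟩ := ih (k+1)
      have hstep := signed_step a k
      have hsplit : (-1:ℝ)^k * (conv a (k+(d+1)) - conv a k)
          = 1 / ((qden a k : ℝ) * (qden a (k+1) : ℝ))
            - (-1:ℝ)^(k+1) * (conv a ((k+1)+d) - conv a (k+1)) := by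
        have h1 : k + (d+1) = (k+1) + d := by omega
        rw [h1, ← hstep, pow_succ]
        ring
      have hq0 := qdenR_pos a k
      have hq1 := qdenR_pos a (k+1)
      have hq2 := qdenR_pos a (k+2)
      have hmono : (qden a k : ℝ) ≤ (qden a (k+2) : ℝ) := by
        exact_mod_cast qden_le_of_le a (by omega : k ≤ k+2)
      have hle : 1 / ((qden a (k+1) : ℝ) * (qden a (k+2) : ℝ)) ≤ 1 / ((qden a k : ℝ) * (qden a (k+1) : ℝ)) := by
        apply one_div_le_one_div_of_le (by positivity)
        calc (qden a k : ℝ) * (qden a (k+1) : ℝ) ≤ (qden a (k+2) : ℝ) * (qden a (k+1):ℝ) :=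
              mul_le_mul_of_nonneg_right hmono (le_of_lt hq1)
          _ = (qden a (k+1) : ℝ) * (qden a (k+2) : ℝ) := by ring
      constructor
      · rw [hsplit]; linarith
      · rw [hsplit]; linarith

lemma qden_lt_two_step (k : ℕ) : (qden a k : ℝ) < (qden a (k+2) : ℝ) := by
  have h1 : (0:ℝ) < (qden a (k+1) : ℝ) := qdenR_pos a (k+1)
  have h2 : (qden a (k+2) : ℝ) = (a (k+1) : ℝ) * (qden a (k+1) : ℝ) + (qden a k : ℝ) := by
    show (((((a (k+1)) : ℕ) * qden a (k+1) + qden a k : ℕ)) : ℝ) = _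
    push_cast; ring
  have ha : (1:ℝ) ≤ (a (k+1) : ℝ) := by exact_mod_cast (a (k+1)).one_le
  nlinarith

/-- the strict gap between `cfVal` and the `k`-th convergent -/
noncomputable def gap (k : ℕ) : ℝ :=
  1 / ((qden a k : ℝ) * (qden a (k+1) : ℝ)) - 1 / ((qden a (k+1) : ℝ) * (qden a (k+2) : ℝ))

lemma gap_pos (k : ℕ) : 0 < gap a k := by
  rw [gap, sub_pos]
  have h0 := qdenR_pos a k
  have h1 := qdenR_pos a (k+1)
  have h2 := qdenR_pos a (k+2)
  apply one_div_lt_one_div_of_lt (by positivity)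
  have := qden_lt_two_step a k
  nlinarith

lemma gap_le (k : ℕ) : gap a k ≤ (-1:ℝ)^k * (cfVal a - conv a k) := by
  have key : ∀ m, k + 2 ≤ m → gap a k ≤ (-1:ℝ)^k * (conv a m - conv a k) := by
    intro m hm
    obtain ⟨d, hd⟩ : ∃ d, m = (k+2) + d := ⟨m - (k+2), by omega⟩
    have h2 : (-1:ℝ)^k * (conv a (k+2) - conv a k) = gap a k := by
      have e1 := signed_step a k
      have e2 := signed_step a (k+1)
      have : conv a (k+2) - conv a k = (conv a (k+2) - conv a (k+1)) + (conv a (k+1) - conv a k) := by ring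
      rw [this, gap]
      have hp : (-1:ℝ)^(k+1) = -(-1:ℝ)^k := by rw [pow_succ]; ring
      have e2' : (-1:ℝ)^k * (conv a (k+2) - conv a (k+1)) = - (1 / ((qden a (k+1) : ℝ) * (qden a (k+2) : ℝ))) := by
        rw [← e2, hp]; ring
      rw [mul_add, e2', e1]; ring
    have h3 : 0 ≤ (-1:ℝ)^(k+2) * (conv a ((k+2)+d) - conv a (k+2)) := (conv_between a d (k+2)).1
    have hp2 : (-1:ℝ)^(k+2) = (-1:ℝ)^k := by ring
    rw [hd]
    have : (-1:ℝ)^k * (conv a ((k+2)+d) - conv a k)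
        = (-1:ℝ)^k * (conv a (k+2) - conv a k) + (-1:ℝ)^(k+2) * (conv a ((k+2)+d) - conv a (k+2)) := by
      rw [hp2]; ring
    rw [this, h2]
    linarith
  have hlim : Tendsto (fun m => (-1:ℝ)^k * (conv a m - conv a k)) atTop
      (nhds ((-1:ℝ)^k * (cfVal a - conv a k))) := by
    exact ((tendsto_cfVal a).sub tendsto_const_nhds).const_mul _
  apply ge_of_tendsto hlim
  filter_upwards [eventually_ge_atTop (k+2)] with m hm using key m hm

lemma sign1 (k : ℕ) : 0 < (-1:ℝ)^k * (cfVal a - conv a k) :=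
  lt_of_lt_of_le (gap_pos a k) (gap_le a k)




noncomputable def xbar (k : ℕ) : ℝ :=
  ((pnum a (k+1) : ℝ) + (pnum a k : ℝ)) / ((qden a (k+1) : ℝ) + (qden a k : ℝ))

lemma pnum_cast (k : ℕ) : (pnum a (k+2) : ℝ) = (a (k+1) : ℝ) * (pnum a (k+1) : ℝ) + (pnum a k : ℝ) := by
  show (((((a (k+1)) : ℕ) * pnum a (k+1) + pnum a k : ℕ)) : ℝ) = _
  push_cast; ring

lemma qden_cast (k : ℕ) : (qden a (k+2) : ℝ) = (a (k+1) : ℝ) * (qden a (k+1) : ℝ) + (qden a k : ℝ) := by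
  show (((((a (k+1)) : ℕ) * qden a (k+1) + qden a k : ℕ)) : ℝ) = _
  push_cast; ring

lemma xbar_den_pos (k : ℕ) : 0 < (qden a (k+1) : ℝ) + (qden a k : ℝ) := by
  have := qdenR_pos a k
  have := qdenR_pos a (k+1)
  linarith

lemma xbar_sub_conv (k : ℕ) : xbar a k - conv a (k+2)
    = ((a (k+1) : ℝ) - 1) * (-1:ℝ)^(k+1) / (((qden a (k+1) : ℝ) + (qden a k : ℝ)) * (qden a (k+2) : ℝ)) := by
  have hd := detR a k
  have h1 := xbar_den_pos a k
  have h2 := qdenR_pos a (k+2)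
  rw [xbar, conv, div_sub_div _ _ (ne_of_gt h1) (ne_of_gt h2), pnum_cast, qden_cast]
  congr 1
  linear_combination (1 - (a (k+1) : ℝ)) * hd

lemma sign2 (k : ℕ) : 0 < (-1:ℝ)^(k+1) * (xbar a k - cfVal a) := by
  have h1 := sign1 a (k+2)
  have h2 := xbar_sub_conv a k
  have hsplit : (-1:ℝ)^(k+1) * (xbar a k - cfVal a)
      = (-1:ℝ)^(k+1) * (xbar a k - conv a (k+2)) + (-1:ℝ)^(k+2) * (cfVal a - conv a (k+2)) := by
    have : (-1:ℝ)^(k+2) = -(-1:ℝ)^(k+1) := by rw [pow_succ]; ring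
    rw [this]; ring
  have hfirst : 0 ≤ (-1:ℝ)^(k+1) * (xbar a k - conv a (k+2)) := by
    rw [h2]
    have ha : (1:ℝ) ≤ (a (k+1) : ℝ) := by exact_mod_cast (a (k+1)).one_le
    have h3 := xbar_den_pos a k
    have h4 := qdenR_pos a (k+2)
    have hsq : (-1:ℝ)^(k+1) * (-1:ℝ)^(k+1) = 1 := by
      rw [← pow_add, ← two_mul, pow_mul]; norm_num
    have hre : (-1:ℝ)^(k+1) * (((a (k+1) : ℝ) - 1) * (-1:ℝ)^(k+1) / (((qden a (k+1) : ℝ) + (qden a k : ℝ)) * (qden a (k+2) : ℝ)))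
        = ((-1:ℝ)^(k+1) * (-1:ℝ)^(k+1)) * (((a (k+1) : ℝ) - 1) / (((qden a (k+1) : ℝ) + (qden a k : ℝ)) * (qden a (k+2) : ℝ))) := by
      ring
    rw [hre, hsq, one_mul]
    apply div_nonneg (by linarith) (by positivity)
  linarith

lemma xbar_sub_conv_succ (k : ℕ) : xbar a k - conv a (k+1)
    = (-1:ℝ)^(k+1) / (((qden a (k+1) : ℝ) + (qden a k : ℝ)) * (qden a (k+1) : ℝ)) := by
  have hd := detR a k
  have h1 := xbar_den_pos a k
  have h2 := qdenR_pos a (k+1)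
  rw [xbar, conv, div_sub_div _ _ (ne_of_gt h1) (ne_of_gt h2)]
  congr 1
  linear_combination -hd

noncomputable def prodR (k : ℕ) : ℝ := ∏ j ∈ Finset.range k, ((a j : ℝ) + 1)

lemma prodR_pos (k : ℕ) : 0 < prodR a k := by
  apply Finset.prod_pos
  intro j _
  have : (1:ℝ) ≤ (a j : ℝ) := by exact_mod_cast (a j).one_le
  linarith

lemma qden_le_prodR (k : ℕ) : (qden a k : ℝ) ≤ prodR a k := by
  have h := qden_le_prod a k
  rw [prodR]
  calc (qden a k : ℝ) ≤ ((∏ j ∈ Finset.range k, ((a j : ℕ) + 1) : ℕ) : ℝ) := by exact_mod_cast h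
    _ = ∏ j ∈ Finset.range k, ((a j : ℝ) + 1) := by push_cast; rfl

lemma gap_eq (k : ℕ) : gap a k = (a (k+1) : ℝ) / ((qden a k : ℝ) * (qden a (k+2) : ℝ)) := by
  have h0 := qdenR_pos a k
  have h1 := qdenR_pos a (k+1)
  have h2 := qdenR_pos a (k+2)
  rw [gap, div_sub_div _ _ (ne_of_gt (by positivity : (0:ℝ) < (qden a k : ℝ) * (qden a (k+1) : ℝ))) (ne_of_gt (by positivity : (0:ℝ) < (qden a (k+1) : ℝ) * (qden a (k+2) : ℝ))), div_eq_div_iff (by positivity) (ne_of_gt (by positivity : (0:ℝ) < (qden a k : ℝ) * (qden a (k+2) : ℝ)))]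
  rw [qden_cast a k]
  ring

lemma cfVal_mem_Ioo : cfVal a ∈ Set.Ioo (0:ℝ) 1 := by
  have h0 := sign1 a 0
  have h1 := sign1 a 1
  have hc0 : conv a 0 = 0 := by simp [conv, pnum, qden]
  have hc1 : conv a 1 ≤ 1 := (conv_mem a 1).2
  simp only [pow_zero, one_mul, hc0, sub_zero] at h0
  simp only [pow_one] at h1
  constructor
  · exact h0
  · nlinarith

variable {b : ℕ → ℕ+}

lemma Acore (k : ℕ) (hab : ∀ j, j < k+1 → b j = a j) :
    |cfVal a - cfVal b| ≤ 1 / ((qden a (k+1) : ℝ))^2 := by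
  have hcongr1 := qden_congr a (k+1) hab
  have hcongr0 := qden_congr a k (fun j hj => hab j (by omega))
  have hconv : conv b (k+1) = conv a (k+1) := by
    rw [conv, conv, hcongr1.1, hcongr1.2]
  have hxbar : xbar b k = xbar a k := by
    rw [xbar, xbar, hcongr1.1, hcongr1.2, hcongr0.1, hcongr0.2]
  set ε : ℝ := (-1:ℝ)^(k+1) with hε
  have hu1 : 0 < ε * (cfVal a - conv a (k+1)) := sign1 a (k+1)
  have hu2 : 0 < ε * (xbar a k - cfVal a) := sign2 a k
  have hv1 : 0 < ε * (cfVal b - conv a (k+1)) := by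
    have := sign1 b (k+1); rw [hconv] at this; exact this
  have hv2 : 0 < ε * (xbar a k - cfVal b) := by
    have := sign2 b k; rw [hxbar] at this; exact this
  have hlen : |xbar a k - conv a (k+1)| = 1 / (((qden a (k+1) : ℝ) + (qden a k : ℝ)) * (qden a (k+1) : ℝ)) := by
    rw [xbar_sub_conv_succ, abs_div, abs_pow, abs_neg, abs_one, one_pow]
    have := xbar_den_pos a k
    have := qdenR_pos a (k+1)
    rw [abs_of_pos (by positivity)]
  have hεsq : ε * ε = 1 := by
    rw [hε, ← pow_add, ← two_mul, pow_mul]; norm_num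
  have habs : |cfVal a - cfVal b| ≤ |xbar a k - conv a (k+1)| := by
    have h1 : ε * (cfVal a - cfVal b) < ε * (xbar a k - conv a (k+1)) := by nlinarith
    have h2 : -(ε * (xbar a k - conv a (k+1))) < ε * (cfVal a - cfVal b) := by nlinarith
    have hεabs : |ε| = 1 := by rw [hε, abs_pow, abs_neg, abs_one, one_pow]
    calc |cfVal a - cfVal b| = |ε| * |cfVal a - cfVal b| := by rw [hεabs, one_mul]
      _ = |ε * (cfVal a - cfVal b)| := (abs_mul _ _).symm
      _ ≤ ε * (xbar a k - conv a (k+1)) := abs_le.mpr ⟨le_of_lt h2, le_of_lt h1⟩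
      _ ≤ |ε * (xbar a k - conv a (k+1))| := le_abs_self _
      _ = |ε| * |xbar a k - conv a (k+1)| := abs_mul _ _
      _ = |xbar a k - conv a (k+1)| := by rw [hεabs, one_mul]
  rw [hlen] at habs
  apply habs.trans
  have h0 := qdenR_pos a k
  have h1 := qdenR_pos a (k+1)
  apply one_div_le_one_div_of_le (by positivity)
  nlinarith

lemma gap_ge1 (k : ℕ) : 1 / (prodR a (k+2))^2 ≤ gap a k := by
  rw [gap_eq]
  have hA : (1:ℝ) ≤ (a (k+1) : ℝ) := by exact_mod_cast (a (k+1)).one_le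
  have h0 := qdenR_pos a k
  have h2 := qdenR_pos a (k+2)
  have hP := prodR_pos a (k+2)
  have hq2P : (qden a (k+2) : ℝ) ≤ prodR a (k+2) := qden_le_prodR a (k+2)
  have hq0q2 : (qden a k : ℝ) ≤ (qden a (k+2) : ℝ) := by
    exact_mod_cast qden_le_of_le a (by omega : k ≤ k+2)
  calc 1 / (prodR a (k+2))^2 ≤ 1 / ((qden a k : ℝ) * (qden a (k+2) : ℝ)) := by
        apply one_div_le_one_div_of_le (by positivity)
        calc (qden a k : ℝ) * (qden a (k+2) : ℝ) ≤ prodR a (k+2) * prodR a (k+2) :=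
              mul_le_mul (hq0q2.trans hq2P) hq2P (le_of_lt h2) (le_of_lt hP)
          _ = (prodR a (k+2))^2 := by ring
    _ ≤ (a (k+1) : ℝ) / ((qden a k : ℝ) * (qden a (k+2) : ℝ)) := by gcongr

lemma prodR_succ (k : ℕ) : prodR a (k+1) = prodR a k * ((a k : ℝ) + 1) := Finset.prod_range_succ _ _

lemma prodR_mono {k m : ℕ} (h : k ≤ m) : prodR a k ≤ prodR a m := by
  induction m with
  | zero => simp at h; simp [h]
  | succ m ih =>
      rcases Nat.lt_or_ge k (m+1) with h'|h'
      · have hk : k ≤ m := by omega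
        have h2 : (1:ℝ) ≤ (a m : ℝ) + 1 := by
          have : (1:ℝ) ≤ (a m : ℝ) := by exact_mod_cast (a m).one_le
          linarith
        calc prodR a k ≤ prodR a m := ih hk
          _ = prodR a m * 1 := by ring
          _ ≤ prodR a m * ((a m : ℝ)+1) := by
              apply mul_le_mul_of_nonneg_left h2 (le_of_lt (prodR_pos a m))
          _ = prodR a (m+1) := (prodR_succ a m).symm
      · have : k = m+1 := by omega
        rw [this]

lemma gap_ge2 (k : ℕ) : 1 / (prodR a (k+2))^2 ≤ gap a (k+1) := by
  rw [gap_eq]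
  set A : ℝ := (a (k+2) : ℝ) with hA
  have hA1 : (1:ℝ) ≤ A := by rw [hA]; exact_mod_cast (a (k+2)).one_le
  have h1 := qdenR_pos a (k+1)
  have h2 := qdenR_pos a (k+2)
  have h3 := qdenR_pos a (k+3)
  have hP := prodR_pos a (k+2)
  have hP1 := prodR_pos a (k+1)
  have hq3 : (qden a (k+3) : ℝ) ≤ (A + 1) * (qden a (k+2) : ℝ) := by
    rw [qden_cast a (k+1)]
    have : (qden a (k+1) : ℝ) ≤ (qden a (k+2) : ℝ) := by exact_mod_cast qden_le_succ a (k+1)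
    rw [hA]; nlinarith
  have hq1P : (qden a (k+1) : ℝ) ≤ prodR a (k+1) := qden_le_prodR a (k+1)
  have hq2P : (qden a (k+2) : ℝ) ≤ prodR a (k+2) := qden_le_prodR a (k+2)
  have hPP : 2 * prodR a (k+1) ≤ prodR a (k+2) := by
    rw [prodR_succ a (k+1)]
    have : (1:ℝ) ≤ (a (k+1) : ℝ) := by exact_mod_cast (a (k+1)).one_le
    nlinarith
  have key : 1 / (prodR a (k+2))^2 ≤ A / ((A+1) * ((qden a (k+1) : ℝ) * (qden a (k+2) : ℝ))) := by
    rw [div_le_div_iff₀ (by positivity) (by positivity)]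
    have e1 : (qden a (k+1) : ℝ) * (qden a (k+2) : ℝ) ≤ (prodR a (k+2)/2) * prodR a (k+2) := by
      apply mul_le_mul _ hq2P (le_of_lt h2) (by positivity)
      linarith
    nlinarith
  apply key.trans
  rw [div_le_div_iff₀ (by positivity) (by positivity)]
  have : (qden a (k+1) : ℝ) * (qden a (k+3) : ℝ) ≤ (qden a (k+1) : ℝ) * ((A+1) * (qden a (k+2):ℝ)) := by
    apply mul_le_mul_of_nonneg_left hq3 (le_of_lt h1)
  nlinarith

lemma Bcore (K : ℕ) (hab : ∀ j, j < K+1 → b j = a j) (hne : b (K+1) ≠ a (K+1)) :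
    1 / (prodR a (K+4))^2 ≤ |cfVal a - cfVal b| := by
  have hcongr1 := qden_congr a (K+1) hab
  have hcongr0 := qden_congr a K (fun j hj => hab j (by omega))
  set P1 : ℝ := (pnum a (K+1) : ℝ) with hP1
  set Q1 : ℝ := (qden a (K+1) : ℝ) with hQ1
  set P0 : ℝ := (pnum a K : ℝ) with hP0
  set Q0 : ℝ := (qden a K : ℝ) with hQ0
  have hQ1pos : 0 < Q1 := qdenR_pos a (K+1)
  have hQ0pos : 0 < Q0 := qdenR_pos a K
  have hdet : P1 * Q0 - Q1 * P0 = (-1:ℝ)^K := detR a K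
  set E : ℝ → ℝ := fun t => (t * P1 + P0) / (t * Q1 + Q0) with hE
  set ε : ℝ := (-1:ℝ)^K with hεdef
  have hεsq : ε * ε = 1 := by
    rw [hεdef, ← pow_add, ← two_mul, pow_mul]; norm_num
  have hεabs : |ε| = 1 := by rw [hεdef, abs_pow, abs_neg, abs_one, one_pow]
  have hpow2 : (-1:ℝ)^(K+2) = ε := by rw [hεdef]; ring
  have hpow3 : (-1:ℝ)^(K+3) = -ε := by rw [hεdef]; ring
  have hden : ∀ t : ℝ, 0 < t → 0 < t * Q1 + Q0 := by
    intro t ht; nlinarith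
  have hgen : ∀ t s : ℝ, 0 < t → 0 < s →
      ε * (E t - E s) = (t - s) / ((t*Q1+Q0) * (s*Q1+Q0)) := by
    intro t s ht hs
    have hdt := hden t ht
    have hds := hden s hs
    have hsub : E t - E s = (t - s) * ε / ((t*Q1+Q0) * (s*Q1+Q0)) := by
      rw [hE]
      simp only
      rw [div_sub_div _ _ (ne_of_gt hdt) (ne_of_gt hds)]
      congr 1
      rw [hεdef]
      linear_combination (t - s) * hdet
    rw [hsub]
    field_simp
    nlinarith [hεsq]
  set a' : ℝ := (a (K+1) : ℝ) with ha'
  set b' : ℝ := (b (K+1) : ℝ) with hb'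
  have ha'1 : (1:ℝ) ≤ a' := by rw [ha']; exact_mod_cast (a (K+1)).one_le
  have hb'1 : (1:ℝ) ≤ b' := by rw [hb']; exact_mod_cast (b (K+1)).one_le
  -- identifications
  have hconva : conv a (K+2) = E a' := by
    rw [conv, hE]
    simp only
    rw [pnum_cast a K, qden_cast a K]
  have hconvb : conv b (K+2) = E b' := by
    rw [conv, hE]
    simp only
    rw [pnum_cast b K, qden_cast b K, hcongr1.1, hcongr1.2, hcongr0.1, hcongr0.2]
  have hxbara : xbar a (K+1) = E (a' + 1) := by
    rw [xbar, hE]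
    simp only
    rw [pnum_cast a K, qden_cast a K]
    congr 1 <;> ring
  have hxbarb : xbar b (K+1) = E (b' + 1) := by
    rw [xbar, hE]
    simp only
    rw [pnum_cast b K, qden_cast b K, hcongr1.1, hcongr1.2, hcongr0.1, hcongr0.2]
    congr 1 <;> ring
  -- signed position facts
  have hu1 : 0 < ε * (cfVal a - E a') := by
    have := sign1 a (K+2); rw [hpow2] at this; rw [← hconva]; exact this
  have hu2 : 0 < ε * (E (a'+1) - cfVal a) := by
    have := sign2 a (K+1); rw [hpow2] at this; rw [← hxbara]; exact this
  have hv1 : 0 < ε * (cfVal b - E b') := by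
    have := sign1 b (K+2); rw [hpow2] at this; rw [← hconvb]; exact this
  have hv2 : 0 < ε * (E (b'+1) - cfVal b) := by
    have := sign2 b (K+1); rw [hpow2] at this; rw [← hxbarb]; exact this
  have hPbound := gap_ge1 a (K+2)
  have hPbound2 := gap_ge2 a (K+2)
  rcases lt_or_gt_of_ne hne with hlt | hgt
  · -- b (K+1) < a (K+1) : v on the conv-side beyond E a'
    have hba : b' + 1 ≤ a' := by
      rw [ha', hb']
      have : (b (K+1) : ℕ) + 1 ≤ (a (K+1) : ℕ) := hlt
      exact_mod_cast this
    have hmono : 0 ≤ ε * (E a' - E (b'+1)) := by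
      rw [hgen a' (b'+1) (by linarith) (by linarith)]
      apply div_nonneg (by linarith)
      have := hden a' (by linarith)
      have := hden (b'+1) (by linarith)
      positivity
    have hlow : gap a (K+2) ≤ ε * (cfVal a - E a') := by
      have := gap_le a (K+2); rw [hpow2] at this; rw [← hconva]; exact this
    have hchain : ε * (cfVal a - cfVal b)
        = ε * (cfVal a - E a') + ε * (E a' - E (b'+1)) + ε * (E (b'+1) - cfVal b) := by ring
    have : 1 / (prodR a (K+4))^2 ≤ ε * (cfVal a - cfVal b) := by
      rw [hchain]
      have := hPbound.trans hlow
      linarith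
    calc 1 / (prodR a (K+4))^2 ≤ ε * (cfVal a - cfVal b) := this
      _ ≤ |ε * (cfVal a - cfVal b)| := le_abs_self _
      _ = |cfVal a - cfVal b| := by rw [abs_mul, hεabs, one_mul]
  · -- a (K+1) < b (K+1) : v beyond E (a'+1)
    have hba : a' + 1 ≤ b' := by
      rw [ha', hb']
      have : (a (K+1) : ℕ) + 1 ≤ (b (K+1) : ℕ) := hgt
      exact_mod_cast this
    have hmono : 0 ≤ ε * (E b' - E (a'+1)) := by
      rw [hgen b' (a'+1) (by linarith) (by linarith)]
      apply div_nonneg (by linarith)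
      have := hden b' (by linarith)
      have := hden (a'+1) (by linarith)
      positivity
    -- ε * (E (a'+1) - cfVal a) ≥ gap a (K+3)
    have hfirst : 0 ≤ ε * (xbar a (K+1) - conv a (K+3)) := by
      rw [xbar_sub_conv a (K+1)]
      have hA2 : (1:ℝ) ≤ (a (K+2) : ℝ) := by exact_mod_cast (a (K+2)).one_le
      have h3 := xbar_den_pos a (K+1)
      have h4 := qdenR_pos a (K+3)
      have hre : ε * (((a (K+2) : ℝ) - 1) * (-1:ℝ)^(K+2) / (((qden a (K+2) : ℝ) + (qden a (K+1) : ℝ)) * (qden a (K+3) : ℝ)))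
          = (ε * (-1:ℝ)^(K+2)) * (((a (K+2) : ℝ) - 1) / (((qden a (K+2) : ℝ) + (qden a (K+1) : ℝ)) * (qden a (K+3) : ℝ))) := by
        ring
      rw [hre, hpow2, hεsq, one_mul]
      apply div_nonneg (by linarith) (by positivity)
    have hsecond : gap a (K+3) ≤ ε * (conv a (K+3) - cfVal a) := by
      have := gap_le a (K+3); rw [hpow3] at this; linarith [this]
    have hsplit : ε * (E (a'+1) - cfVal a)
        = ε * (xbar a (K+1) - conv a (K+3)) + ε * (conv a (K+3) - cfVal a) := by
      rw [hxbara]; ring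
    have hlow : gap a (K+3) ≤ ε * (E (a'+1) - cfVal a) := by
      rw [hsplit]; linarith
    have hchain : ε * (cfVal b - cfVal a)
        = ε * (cfVal b - E b') + ε * (E b' - E (a'+1)) + ε * (E (a'+1) - cfVal a) := by ring
    have : 1 / (prodR a (K+4))^2 ≤ ε * (cfVal b - cfVal a) := by
      rw [hchain]
      have h5 : 1 / (prodR a (K+4))^2 ≤ gap a (K+3) := hPbound2
      linarith [h5.trans hlow]
    calc 1 / (prodR a (K+4))^2 ≤ ε * (cfVal b - cfVal a) := this
      _ ≤ |ε * (cfVal b - cfVal a)| := le_abs_self _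
      _ = |cfVal b - cfVal a| := by rw [abs_mul, hεabs, one_mul]
      _ = |cfVal a - cfVal b| := abs_sub_comm _ _

lemma conv_one : conv a 1 = 1 / (a 0 : ℝ) := by
  rw [conv]
  have h1 : pnum a 1 = 1 := rfl
  have h2 : qden a 1 = (a 0 : ℕ) := rfl
  rw [h1, h2]
  norm_num

lemma xbar_zero : xbar a 0 = 1 / ((a 0 : ℝ) + 1) := by
  rw [xbar]
  have h1 : pnum a 1 = 1 := rfl
  have h2 : qden a 1 = (a 0 : ℕ) := rfl
  have h3 : pnum a 0 = 0 := rfl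
  have h4 : qden a 0 = 1 := rfl
  rw [h1, h2, h3, h4]
  norm_num

lemma cfVal_lt_inv : cfVal a < 1 / (a 0 : ℝ) := by
  have h := sign1 a 1
  rw [pow_one, conv_one] at h
  linarith

lemma inv_lt_cfVal : 1 / ((a 0 : ℝ) + 1) < cfVal a := by
  have h := sign2 a 0
  rw [pow_one, xbar_zero] at h
  linarith

lemma cfVal_ne_zero_case (h : a 0 ≠ b 0) : cfVal a ≠ cfVal b := by
  have key : ∀ c d : ℕ → ℕ+, c 0 < d 0 → cfVal d < cfVal c := by
    intro c d hcd
    have h1 : cfVal d < 1 / (d 0 : ℝ) := cfVal_lt_inv d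
    have h2 : 1 / ((c 0 : ℝ) + 1) < cfVal c := inv_lt_cfVal c
    have h3 : (1:ℝ) / (d 0 : ℝ) ≤ 1 / ((c 0 : ℝ) + 1) := by
      apply one_div_le_one_div_of_le
      · have : (0:ℝ) < (c 0 : ℝ) := by exact_mod_cast (c 0).pos
        linarith
      · have : (c 0 : ℕ) + 1 ≤ (d 0 : ℕ) := hcd
        exact_mod_cast this
    linarith
  rcases lt_or_gt_of_ne h with hlt | hgt
  · exact (key a b hlt).ne'
  · exact (key b a hgt).ne

lemma cfVal_injective : Function.Injective cfVal := by
  intro a b heq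
  by_contra hab
  have hex : ∃ k, a k ≠ b k := by
    by_contra h'
    push_neg at h'
    exact hab (funext h')
  classical
  obtain ⟨k, hkne, hmin⟩ : ∃ k, (a k ≠ b k) ∧ ∀ j, j < k → a j = b j := by
    refine ⟨Nat.find hex, Nat.find_spec hex, ?_⟩
    intro j hj
    by_contra h'
    exact (Nat.find_min hex hj) h'
  cases k with
  | zero => exact cfVal_ne_zero_case a hkne heq
  | succ K =>
      have hagree : ∀ j, j < K+1 → b j = a j := fun j hj => (hmin j hj).symm
      have hne' : b (K+1) ≠ a (K+1) := fun h' => hkne h'.symm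
      have := Bcore a K hagree hne'
      rw [heq, sub_self, abs_zero] at this
      have hP := prodR_pos a (K+4)
      have : (0:ℝ) < 1 / (prodR a (K+4))^2 := by positivity
      linarith

end CF

lemma coeff_cfVal (a : ℕ → ℕ+) : coeff (cfVal a) = a := by
  classical
  rw [coeff]
  have h : ∃ b : ℕ → ℕ+, cfVal b = cfVal a := ⟨a, rfl⟩
  simp only [dif_pos h]
  exact CF.cfVal_injective h.choose_spec

set_option maxHeartbeats 2000000 in
/-- Hölder-type two-sided bound for `f₁` (Theorem 10 of the paper): for `x ∈ I` with
partial quotients `a` (0-indexed: `a j = a_{j+1}`), `n ≥ 2` even with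
`∑_{j=1}^n log a_j > 0`, and `y ∈ I_n(x) \\ I_{n+1}(x)`,
the ratio `log|f₁(x)−f₁(y)| / log|x−y|` is bounded below and above as stated.
Since `n` is even, `⌈n/2⌉ = n/2`, `2⌈n/2⌉+3 = n+3` and `2⌈n/2⌉+5 = n+5`;
1-indexed coefficients `a_{n+2}, a_{n+3}, a_{n+5}` are `a (n+1), a (n+2), a (n+4)`. -/
theorem holder_ratio_bounds_cantorF1 (a : ℕ → ℕ+) (x : ℝ) (hx : x ∈ Iirr)
    (hxa : cfVal a = x) (n : ℕ) (hn : 2 ≤ n) (hne : Even n)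
    (hpos : 0 < ∑ j ∈ Finset.range n, Real.log (a j)) (y : ℝ)
    (hy : y ∈ fundInt a n \ fundInt a (n+1)) :
    ((1 / (n:ℝ)) * ∑ j ∈ Finset.range (n / 2), Real.log (a (2*j))) /
        ((1 / (n:ℝ)) * ∑ j ∈ Finset.range (n+3), Real.log ((a j : ℝ) + 1) +
          (Real.log 2 / 2 +
            Real.log (max (((a (n+1) : ℝ) + 2) / ((a (n+1) : ℝ) + 1))
              (((a (n+2) : ℝ) + 2) / ((a (n+2) : ℝ) + 1)))) / (n:ℝ)) ≤
      Real.log |cantorF1 x - cantorF1 y| / Real.log |x - y| ∧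
    Real.log |cantorF1 x - cantorF1 y| / Real.log |x - y| ≤
      ((1 / (n:ℝ)) * ∑ j ∈ Finset.range (n / 2 + 3), Real.log ((a (2*j) : ℝ) + 1) +
          (Real.log 2 / 2 +
            Real.log (max (((a (n+2) : ℝ) + 2) / ((a (n+2) : ℝ) + 1))
              (((a (n+4) : ℝ) + 2) / ((a (n+4) : ℝ) + 1)))) / (2*(n:ℝ))) /
        ((1 / (n:ℝ)) * ∑ j ∈ Finset.range n, Real.log (a j)) := by
  classical
  obtain ⟨hy1, hy2⟩ := hy
  obtain ⟨b, hby, hagree⟩ := hy1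
  have hbn : b n ≠ a n := by
    intro h
    exact hy2 ⟨b, hby, fun j hj => by
      rcases Nat.lt_succ_iff_lt_or_eq.mp hj with h' | h'
      · exact hagree j h'
      · rw [h']; exact h⟩
  have hcoeffx : coeff x = a := by rw [← hxa]; exact coeff_cfVal a
  have hcoeffy : coeff y = b := by rw [← hby]; exact coeff_cfVal b
  set c : ℕ → ℕ+ := fun j => a (2*j) with hc
  set d : ℕ → ℕ+ := fun j => b (2*j) with hd
  have hf1x : cantorF1 x = cfVal c := by rw [cantorF1, hcoeffx]
  have hf1y : cantorF1 y = cfVal d := by rw [cantorF1, hcoeffy]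
  have hn0 : (0:ℝ) < (n:ℝ) := by exact_mod_cast (by omega : 0 < n)
  have hnR : ((n:ℝ)) ≠ 0 := ne_of_gt hn0
  have hmod : n % 2 = 0 := Nat.even_iff.mp hne
  set m := n / 2 with hm
  have hm2 : 2 * m = n := by omega
  obtain ⟨M, hM⟩ : ∃ M, m = M + 1 := ⟨m - 1, by omega⟩
  obtain ⟨N, hN⟩ : ∃ N, n = N + 1 := ⟨n - 1, by omega⟩
  have hagree_cd : ∀ j, j < M + 1 → d j = c j := by
    intro j hj
    show b (2*j) = a (2*j)
    exact hagree _ (by omega)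
  have hne_cd : d (M+1) ≠ c (M+1) := by
    show b (2*(M+1)) ≠ a (2*(M+1))
    have : 2*(M+1) = n := by omega
    rw [this]; exact hbn
  have hB_ub : |x - y| ≤ 1 / ((qden a n : ℝ))^2 := by
    have h := CF.Acore a (b := b) N (fun j hj => hagree j (by omega))
    rw [hxa, hby] at h
    rw [hN]; exact h
  have hB_lb : 1 / (CF.prodR a (n+3))^2 ≤ |x - y| := by
    have hbn' : b (N+1) ≠ a (N+1) := by rw [← hN]; exact hbn
    have h := CF.Bcore a (b := b) N (fun j hj => hagree j (by omega)) hbn'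
    rw [hxa, hby] at h
    have he : N+4 = n+3 := by omega
    rw [he] at h
    exact h
  have hA_ub : |cantorF1 x - cantorF1 y| ≤ 1 / ((qden c (M+1) : ℝ))^2 := by
    have h := CF.Acore c (b := d) M hagree_cd
    rw [hf1x, hf1y]; exact h
  have hA_lb : 1 / (CF.prodR c (m+3))^2 ≤ |cantorF1 x - cantorF1 y| := by
    have h := CF.Bcore c (b := d) M hagree_cd hne_cd
    have he : M+4 = m+3 := by omega
    rw [he] at h
    rw [hf1x, hf1y]; exact h
  have hPBn_pos := CF.prodR_pos a (n+3)
  have hPAm_pos := CF.prodR_pos c (m+3)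
  have hB_pos : 0 < |x - y| := lt_of_lt_of_le (by positivity) hB_lb
  have hA_pos : 0 < |cantorF1 x - cantorF1 y| := lt_of_lt_of_le (by positivity) hA_lb
  set PB : ℝ := ∏ j ∈ Finset.range n, ((a j : ℝ)) with hPB
  have hPB_pos : 0 < PB := Finset.prod_pos fun j _ => by exact_mod_cast (a j).pos
  have hPB_le : PB ≤ (qden a n : ℝ) := by
    have h := CF.prod_le_qden a n
    rw [hPB]
    calc (∏ j ∈ Finset.range n, ((a j : ℝ))) = ((∏ j ∈ Finset.range n, (a j : ℕ) : ℕ) : ℝ) := by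
          push_cast; rfl
      _ ≤ (qden a n : ℝ) := by exact_mod_cast h
  set PA : ℝ := ∏ j ∈ Finset.range m, ((a (2*j) : ℝ)) with hPA
  have hPA_pos : 0 < PA := Finset.prod_pos fun j _ => by exact_mod_cast (a (2*j)).pos
  have hPA_le : PA ≤ (qden c (M+1) : ℝ) := by
    have h := CF.prod_le_qden c (M+1)
    rw [hPA, ← hM]
    calc (∏ j ∈ Finset.range m, ((a (2*j) : ℝ))) = ((∏ j ∈ Finset.range m, (c j : ℕ) : ℕ) : ℝ) := by
          push_cast; rfl
      _ ≤ (qden c m : ℝ) := by rw [hM]; exact_mod_cast h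
  have hB_ub2 : |x - y| ≤ 1 / PB^2 := by
    apply hB_ub.trans
    apply one_div_le_one_div_of_le (by positivity)
    have := CF.qdenR_pos a n
    nlinarith
  have hA_ub2 : |cantorF1 x - cantorF1 y| ≤ 1 / PA^2 := by
    apply hA_ub.trans
    apply one_div_le_one_div_of_le (by positivity)
    have := CF.qdenR_pos c (M+1)
    nlinarith
  set SB : ℝ := ∑ j ∈ Finset.range n, Real.log (a j) with hSB
  set SA : ℝ := ∑ j ∈ Finset.range m, Real.log (a (2*j)) with hSA
  set TB : ℝ := ∑ j ∈ Finset.range (n+3), Real.log ((a j : ℝ) + 1) with hTB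
  set TA : ℝ := ∑ j ∈ Finset.range (m+3), Real.log ((a (2*j) : ℝ) + 1) with hTA
  have hSB_eq : Real.log PB = SB := by
    rw [hPB, hSB, Real.log_prod]
    intro j _
    exact ne_of_gt (by exact_mod_cast (a j).pos)
  have hSA_eq : Real.log PA = SA := by
    rw [hPA, hSA, Real.log_prod]
    intro j _
    exact ne_of_gt (by exact_mod_cast (a (2*j)).pos)
  have hTB_eq : Real.log (CF.prodR a (n+3)) = TB := by
    rw [CF.prodR, hTB, Real.log_prod]
    intro j _
    have : (1:ℝ) ≤ (a j : ℝ) := by exact_mod_cast (a j).one_le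
    linarith
  have hTA_eq : Real.log (CF.prodR c (m+3)) = TA := by
    rw [CF.prodR, hTA, Real.log_prod]
    intro j _
    have : (1:ℝ) ≤ (c j : ℝ) := by exact_mod_cast (c j).one_le
    linarith
  set LB : ℝ := Real.log |x - y| with hLB
  set LA : ℝ := Real.log |cantorF1 x - cantorF1 y| with hLA
  have hlogB_ub : LB ≤ -(2 * SB) := by
    have h := Real.log_le_log hB_pos hB_ub2
    rw [one_div, Real.log_inv, Real.log_pow, hSB_eq] at h
    rw [hLB]
    push_cast at h
    linarith
  have hlogB_lb : -(2 * TB) ≤ LB := by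
    have h := Real.log_le_log (by positivity) hB_lb
    rw [one_div, Real.log_inv, Real.log_pow, hTB_eq] at h
    rw [hLB]
    push_cast at h
    linarith
  have hlogA_ub : LA ≤ -(2 * SA) := by
    have h := Real.log_le_log hA_pos hA_ub2
    rw [one_div, Real.log_inv, Real.log_pow, hSA_eq] at h
    rw [hLA]
    push_cast at h
    linarith
  have hlogA_lb : -(2 * TA) ≤ LA := by
    have h := Real.log_le_log (by positivity) hA_lb
    rw [one_div, Real.log_inv, Real.log_pow, hTA_eq] at h
    rw [hLA]
    push_cast at h
    linarith
  have hSB_pos : 0 < SB := hpos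
  have hSA_nonneg : 0 ≤ SA := by
    rw [hSA]
    apply Finset.sum_nonneg
    intro j _
    apply Real.log_nonneg
    exact_mod_cast (a (2*j)).one_le
  have hTB_pos : 0 < TB := by
    rw [hTB]
    apply Finset.sum_pos
    · intro j _
      apply Real.log_pos
      have : (1:ℝ) ≤ (a j : ℝ) := by exact_mod_cast (a j).one_le
      linarith
    · exact ⟨0, Finset.mem_range.mpr (by omega)⟩
  have hTA_nonneg : 0 ≤ TA := by
    rw [hTA]
    apply Finset.sum_nonneg
    intro j _
    apply Real.log_nonneg
    have : (1:ℝ) ≤ (a (2*j) : ℝ) := by exact_mod_cast (a (2*j)).one_le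
    linarith
  have hLB_neg : 0 < -LB := by linarith
  have hLA_nonneg : 0 ≤ -LA := by linarith
  set C1 : ℝ := Real.log 2 / 2 +
      Real.log (max (((a (n+1) : ℝ) + 2) / ((a (n+1) : ℝ) + 1))
        (((a (n+2) : ℝ) + 2) / ((a (n+2) : ℝ) + 1))) with hC1
  set C2 : ℝ := Real.log 2 / 2 +
      Real.log (max (((a (n+2) : ℝ) + 2) / ((a (n+2) : ℝ) + 1))
        (((a (n+4) : ℝ) + 2) / ((a (n+4) : ℝ) + 1))) with hC2
  have hmaxlog : ∀ u v : ℕ+, 0 ≤ Real.log (max (((u : ℝ) + 2) / ((u : ℝ) + 1))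
      (((v : ℝ) + 2) / ((v : ℝ) + 1))) := by
    intro u v
    apply Real.log_nonneg
    have hu : (0:ℝ) < (u : ℝ) + 1 := by
      have : (0:ℝ) < (u : ℝ) := by exact_mod_cast u.pos
      linarith
    have h1 : (1:ℝ) ≤ ((u : ℝ) + 2) / ((u : ℝ) + 1) := by
      rw [le_div_iff₀ hu]; linarith
    exact h1.trans (le_max_left _ _)
  have hC1_nonneg : 0 ≤ C1 := by
    rw [hC1]
    have h2 : 0 < Real.log 2 := Real.log_pos (by norm_num)
    have := hmaxlog (a (n+1)) (a (n+2))
    linarith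
  have hC2_nonneg : 0 ≤ C2 := by
    rw [hC2]
    have h2 : 0 < Real.log 2 := Real.log_pos (by norm_num)
    have := hmaxlog (a (n+2)) (a (n+4))
    linarith
  have hratio : LA / LB = (-LA) / (-LB) := (neg_div_neg_eq _ _).symm
  constructor
  · have hd1 : (0:ℝ) < (1 / (n:ℝ)) * TB + C1 / (n:ℝ) := by
      have h1 : 0 < (1 / (n:ℝ)) * TB := mul_pos (by positivity) hTB_pos
      have h2 : 0 ≤ C1 / (n:ℝ) := div_nonneg hC1_nonneg (le_of_lt hn0)
      linarith
    have hd2 : (0:ℝ) < TB + C1 := by linarith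
    have hLHS : (1 / (n:ℝ)) * SA / ((1 / (n:ℝ)) * TB + C1 / (n:ℝ)) = SA / (TB + C1) := by
      rw [div_eq_div_iff (ne_of_gt hd1) (ne_of_gt hd2)]
      ring
    rw [hLHS]
    have step1 : SA / (TB + C1) ≤ SA / TB := by
      gcongr
      linarith
    have step2 : SA / TB = (2 * SA) / (2 * TB) := by
      rw [mul_div_mul_left SA TB (two_ne_zero)]
    have step3 : (2 * SA) / (2 * TB) ≤ (-LA) / (-LB) :=
      div_le_div₀ hLA_nonneg (by linarith) hLB_neg (by linarith)
    calc SA / (TB + C1) ≤ SA / TB := step1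
      _ = (2 * SA) / (2 * TB) := step2
      _ ≤ (-LA) / (-LB) := step3
      _ = LA / LB := neg_div_neg_eq _ _
  · have hC2n : C2 / (2 * (n:ℝ)) = (C2 / 2) / (n:ℝ) := by
      rw [div_div]
    have hd3 : (0:ℝ) < (1 / (n:ℝ)) * SB := mul_pos (by positivity) hSB_pos
    have hRHS : ((1 / (n:ℝ)) * TA + C2 / (2 * (n:ℝ))) / ((1 / (n:ℝ)) * SB)
        = (TA + C2 / 2) / SB := by
      rw [hC2n, div_eq_div_iff (ne_of_gt hd3) (ne_of_gt hSB_pos)]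
      ring
    rw [hRHS]
    have step3 : (-LA) / (-LB) ≤ (2 * TA) / (2 * SB) :=
      div_le_div₀ (by linarith) (by linarith) (by linarith) (by linarith)
    have step2 : (2 * TA) / (2 * SB) = TA / SB := mul_div_mul_left TA SB (two_ne_zero)
    have step1 : TA / SB ≤ (TA + C2 / 2) / SB := by
      have hb : TA ≤ TA + C2 / 2 := le_add_of_nonneg_right (div_nonneg hC2_nonneg (by norm_num))
      gcongr
    calc LA / LB = (-LA) / (-LB) := hratio
      _ ≤ (2 * TA) / (2 * SB) := step3
      _ = TA / SB := step2
      _ ≤ (TA + C2 / 2) / SB := step1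
end

section
/- Let x ∈ I have continued fraction coefficients (a_j)_{j≥1}, let n ≥ 3 be odd with Σ_{j=1}^n log a_j > 0, and let y ∈ I_n(x) \ I_{n+1}(x). Then ( (1/n) Σ_{j=1}^{⌊n/2⌋} log a_{2j} ) / ( (1/n) Σ_{j=1}^{n+3} log(a_j+1) + C_1(n)/n ) ≤ log|f_2(x)−f_2(y)| / log|x−y| ≤ ( (1/n) Σ_{j=1}^{⌊n/2⌋+3} log(a_{2j}+1) + C_2(n)/n ) / ( (1/n) Σ_{j=1}^n log a_j ), where C_1(n) = (log 2)/2 + log max( (a_{n+2}+2)/(a_{n+2}+1), (a_{n+3}+2)/(a_{n+3}+1) ) and C_2(n) = (log 2)/2 + log max( (a_{2⌊n/2⌋+4}+2)/(a_{2⌊n/2⌋+4}+1), (a_{2⌊n/2⌋+6}+2)/(a_{2⌊n/2⌋+6}+1) ). -/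
open Filter Finset MeasureTheory

namespace CFAux

lemma q_pos (a : ℕ → ℕ+) : ∀ n, 0 < qden a n
  | 0 => Nat.one_pos
  | 1 => (a 0).pos
  | (n+2) => by
      have h1 := q_pos a (n+1)
      have := (a (n+1)).pos
      show 0 < (a (n+1) : ℕ) * qden a (n+1) + qden a n
      have := q_pos a n
      omega

lemma q_mono (a : ℕ → ℕ+) : ∀ n, qden a n ≤ qden a (n+1)
  | 0 => by show 1 ≤ (a 0 : ℕ); exact (a 0).one_le
  | (n+1) => by
      have h1 := q_pos a n
      have h2 := (a (n+1)).one_le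
      show qden a (n+1) ≤ (a (n+1) : ℕ) * qden a (n+1) + qden a n
      calc qden a (n+1) = 1 * qden a (n+1) := (one_mul _).symm
        _ ≤ (a (n+1) : ℕ) * qden a (n+1) + qden a n := by
            have : (1:ℕ) * qden a (n+1) ≤ (a (n+1) : ℕ) * qden a (n+1) :=
              Nat.mul_le_mul_right _ h2
            omega

lemma q_mono' (a : ℕ → ℕ+) {m n : ℕ} (h : m ≤ n) : qden a m ≤ qden a n := by
  induction n with
  | zero => simpa [Nat.le_zero.mp h]
  | succ k ih =>
    rcases Nat.lt_or_ge m (k+1) with h'|h'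
    · exact le_trans (ih (Nat.lt_succ_iff.mp h')) (q_mono a k)
    · have : m = k+1 := le_antisymm h h'
      simp [this]

lemma prod_le_q (a : ℕ → ℕ+) : ∀ n, ∏ j ∈ range n, (a j : ℕ) ≤ qden a n
  | 0 => by simp [qden]
  | 1 => by simp [qden]
  | (n+2) => by
      have h := prod_le_q a (n+1)
      have : ∏ j ∈ range (n+2), (a j : ℕ) = (∏ j ∈ range (n+1), (a j : ℕ)) * a (n+1) := by
        rw [prod_range_succ]
      rw [this]
      show _ ≤ (a (n+1) : ℕ) * qden a (n+1) + qden a n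
      calc (∏ j ∈ range (n+1), (a j : ℕ)) * a (n+1) ≤ qden a (n+1) * a (n+1) :=
            Nat.mul_le_mul_right _ h
        _ = (a (n+1) : ℕ) * qden a (n+1) := Nat.mul_comm _ _
        _ ≤ _ := Nat.le_add_right _ _

lemma q_le_prod (a : ℕ → ℕ+) : ∀ n, qden a n ≤ ∏ j ∈ range n, ((a j : ℕ) + 1)
  | 0 => by simp [qden]
  | 1 => by simp [qden]
  | (n+2) => by
      have h := q_le_prod a (n+1)
      have hm := q_mono a n
      rw [prod_range_succ]
      show (a (n+1) : ℕ) * qden a (n+1) + qden a n ≤ _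
      calc (a (n+1) : ℕ) * qden a (n+1) + qden a n
          ≤ (a (n+1) : ℕ) * qden a (n+1) + qden a (n+1) := by omega
        _ = qden a (n+1) * ((a (n+1) : ℕ) + 1) := by ring
        _ ≤ _ := Nat.mul_le_mul h (le_refl _)

lemma det (a : ℕ → ℕ+) : ∀ n, (pnum a (n+1) : ℤ) * qden a n - pnum a n * qden a (n+1) = (-1)^n
  | 0 => by simp [pnum, qden]
  | (n+1) => by
      have h := det a n
      show (((a (n+1) : ℕ) * pnum a (n+1) + pnum a n : ℕ) : ℤ) * qden a (n+1)
          - (pnum a (n+1) : ℤ) * (((a (n+1) : ℕ) * qden a (n+1) + qden a n : ℕ) : ℤ) = _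
      push_cast
      push_cast at h
      ring_nf
      ring_nf at h
      linear_combination (-1 : ℤ) * h

lemma det2 (a : ℕ → ℕ+) (n : ℕ) :
    (pnum a (n+2) : ℤ) * qden a n - pnum a n * qden a (n+2) = (a (n+1) : ℤ) * (-1)^n := by
  have h := det a n
  show (((a (n+1) : ℕ) * pnum a (n+1) + pnum a n : ℕ) : ℤ) * qden a n
      - (pnum a n : ℤ) * (((a (n+1) : ℕ) * qden a (n+1) + qden a n : ℕ) : ℤ) = _
  push_cast
  push_cast at h
  linear_combination (a (n+1) : ℤ) * h

lemma qq_growth (a : ℕ → ℕ+) : ∀ n, 2^n ≤ qden a n * qden a (n+1)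
  | 0 => by show 2^0 ≤ 1 * (a 0 : ℕ); rw [pow_zero, one_mul]; exact (a 0).one_le
  | (n+1) => by
      have h := qq_growth a n
      have hm := q_mono a n
      have h2 : 2 * qden a n ≤ qden a (n+2) := by
        show 2 * qden a n ≤ (a (n+1) : ℕ) * qden a (n+1) + qden a n
        have := (a (n+1)).one_le
        have : qden a (n+1) ≤ (a (n+1) : ℕ) * qden a (n+1) := Nat.le_mul_of_pos_left _ (a (n+1)).pos
        omega
      calc 2^(n+1) = 2 * 2^n := by ring
        _ ≤ 2 * (qden a n * qden a (n+1)) := Nat.mul_le_mul_left _ h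
        _ = qden a (n+1) * (2 * qden a n) := by ring
        _ ≤ qden a (n+1) * qden a (n+2) := Nat.mul_le_mul_left _ h2

noncomputable def conv (a : ℕ → ℕ+) (n : ℕ) : ℝ := (pnum a n : ℝ) / (qden a n : ℝ)

lemma qR_pos (a : ℕ → ℕ+) (n : ℕ) : (0:ℝ) < (qden a n : ℝ) := by
  exact_mod_cast q_pos a n

lemma conv_diff (a : ℕ → ℕ+) (n : ℕ) :
    conv a (n+1) - conv a n = (-1)^n / ((qden a n : ℝ) * qden a (n+1)) := by
  have h := det a n
  have h1 := (qR_pos a n).ne'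
  have h2 := (qR_pos a (n+1)).ne'
  have hR : (pnum a (n+1) : ℝ) * qden a n - pnum a n * qden a (n+1) = (-1)^n := by
    exact_mod_cast h
  unfold conv
  field_simp
  linear_combination hR

lemma conv_diff2 (a : ℕ → ℕ+) (n : ℕ) :
    conv a (n+2) - conv a n = (a (n+1) : ℝ) * (-1)^n / ((qden a n : ℝ) * qden a (n+2)) := by
  have h := det2 a n
  have h1 := (qR_pos a n).ne'
  have h2 := (qR_pos a (n+2)).ne'
  have hR : (pnum a (n+2) : ℝ) * qden a n - pnum a n * qden a (n+2) = (a (n+1) : ℝ) * (-1)^n := by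
    exact_mod_cast h
  unfold conv
  field_simp
  linear_combination hR

lemma qq_growthR (a : ℕ → ℕ+) (n : ℕ) : (2:ℝ)^n ≤ (qden a n : ℝ) * qden a (n+1) := by
  exact_mod_cast qq_growth a n

lemma conv_dist (a : ℕ → ℕ+) (n : ℕ) :
    |conv a (n+1) - conv a n| = 1 / ((qden a n : ℝ) * qden a (n+1)) := by
  rw [conv_diff, abs_div, abs_pow, abs_neg, abs_one, one_pow]
  congr 1
  exact abs_of_pos (mul_pos (qR_pos a n) (qR_pos a (n+1)))

lemma conv_cauchy (a : ℕ → ℕ+) : CauchySeq (conv a) := by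
  apply cauchySeq_of_le_geometric (1/2 : ℝ) 1 (by norm_num)
  intro n
  rw [dist_comm, Real.dist_eq, conv_dist a n, one_mul, div_pow, one_pow]
  exact one_div_le_one_div_of_le (by positivity) (qq_growthR a n)

lemma conv_tendsto (a : ℕ → ℕ+) : Tendsto (conv a) atTop (nhds (cfVal a)) := by
  obtain ⟨L, hL⟩ := cauchySeq_tendsto_of_complete (conv_cauchy a)
  have : cfVal a = L := hL.limUnder_eq
  rw [this]; exact hL



lemma even_sm (a : ℕ → ℕ+) : StrictMono (fun k => conv a (2*k)) := by
  apply strictMono_nat_of_lt_succ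
  intro k
  have h := conv_diff2 a (2*k)
  have hpos : (0:ℝ) < (a (2*k+1) : ℝ) * (-1)^(2*k) / ((qden a (2*k) : ℝ) * qden a (2*k+2)) := by
    rw [pow_mul]
    have h1 : (0:ℝ) < (a (2*k+1) : ℝ) := by exact_mod_cast (a (2*k+1)).pos
    have h2 := qR_pos a (2*k)
    have h3 := qR_pos a (2*k+2)
    norm_num
    positivity
  show conv a (2*k) < conv a (2*(k+1))
  have : 2*(k+1) = 2*k+2 := by ring
  rw [this]
  linarith [h, hpos]

lemma odd_sa (a : ℕ → ℕ+) : StrictAnti (fun k => conv a (2*k+1)) := by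
  apply strictAnti_nat_of_succ_lt
  intro k
  have h := conv_diff2 a (2*k+1)
  have hneg : (a (2*k+2) : ℝ) * (-1)^(2*k+1) / ((qden a (2*k+1) : ℝ) * qden a (2*k+3)) < 0 := by
    have ho : ((-1:ℝ))^(2*k+1) = -1 := Odd.neg_one_pow ⟨k, by ring⟩
    rw [ho, mul_neg_one, neg_div, neg_lt_zero]
    have h1 : (0:ℝ) < (a (2*k+2) : ℝ) := by exact_mod_cast (a (2*k+2)).pos
    have h2 := qR_pos a (2*k+1)
    have h3 := qR_pos a (2*k+3)
    positivity
  show conv a (2*(k+1)+1) < conv a (2*k+1)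
  have : 2*(k+1)+1 = 2*k+3 := by ring
  rw [this]
  linarith [h, hneg]

lemma tendsto_even (a : ℕ → ℕ+) : Tendsto (fun k => conv a (2*k)) atTop (nhds (cfVal a)) :=
  (conv_tendsto a).comp (StrictMono.tendsto_atTop (fun m n h => by omega))

lemma tendsto_odd (a : ℕ → ℕ+) : Tendsto (fun k => conv a (2*k+1)) atTop (nhds (cfVal a)) :=
  (conv_tendsto a).comp (StrictMono.tendsto_atTop (fun m n h => by omega))

lemma conv_even_lt (a : ℕ → ℕ+) (k : ℕ) : conv a (2*k) < cfVal a := by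
  have h2 : conv a (2*(k+1)) ≤ cfVal a := by
    apply ge_of_tendsto (tendsto_even a)
    filter_upwards [eventually_ge_atTop (k+1)] with l hl
    exact (even_sm a).monotone hl
  exact lt_of_lt_of_le (even_sm a (Nat.lt_succ_self k)) h2

lemma conv_odd_gt (a : ℕ → ℕ+) (k : ℕ) : cfVal a < conv a (2*k+1) := by
  have h2 : cfVal a ≤ conv a (2*(k+1)+1) := by
    apply le_of_tendsto (tendsto_odd a)
    filter_upwards [eventually_ge_atTop (k+1)] with l hl
    exact (odd_sa a).antitone hl
  exact lt_of_le_of_lt h2 (odd_sa a (Nat.lt_succ_self k))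

/-- For even m : conv m < x < conv (m+1); for odd m : conv (m+1) < x < conv m. -/
lemma between_even (a : ℕ → ℕ+) {m : ℕ} (h : Even m) :
    conv a m < cfVal a ∧ cfVal a < conv a (m+1) := by
  obtain ⟨k, hk⟩ := h
  have hm : m = 2*k := by omega
  subst hm
  exact ⟨conv_even_lt a k, conv_odd_gt a k⟩

lemma between_odd (a : ℕ → ℕ+) {m : ℕ} (h : Odd m) :
    conv a (m+1) < cfVal a ∧ cfVal a < conv a m := by
  obtain ⟨k, hk⟩ := h
  subst hk
  constructor
  · have : 2*k+1+1 = 2*(k+1) := by ring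
    rw [this]; exact conv_even_lt a (k+1)
  · exact conv_odd_gt a k

lemma abs_upper (a : ℕ → ℕ+) (m : ℕ) :
    |cfVal a - conv a m| ≤ 1 / ((qden a m : ℝ) * qden a (m+1)) := by
  rcases Nat.even_or_odd m with h|h
  · obtain ⟨h1, h2⟩ := between_even a h
    have hd := conv_diff a m
    rw [h.neg_one_pow] at hd
    rw [abs_of_pos (by linarith)]
    linarith
  · obtain ⟨h1, h2⟩ := between_odd a h
    have hd := conv_diff a m
    rw [h.neg_one_pow, neg_div] at hd
    rw [abs_of_neg (by linarith)]
    linarith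

lemma abs_lower (a : ℕ → ℕ+) (m : ℕ) :
    (a (m+1) : ℝ) / ((qden a m : ℝ) * qden a (m+2)) ≤ |cfVal a - conv a m| := by
  rcases Nat.even_or_odd m with h|h
  · obtain ⟨h1, _⟩ := between_even a h
    have h2 : conv a (m+2) < cfVal a := by
      have he : Even (m+2) := by rcases h with ⟨k,hk⟩; exact ⟨k+1, by omega⟩
      exact (between_even a he).1
    have hd := conv_diff2 a m
    rw [h.neg_one_pow, mul_one] at hd
    rw [abs_of_pos (by linarith)]
    linarith
  · obtain ⟨_, h1⟩ := between_odd a h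
    have h2 : cfVal a < conv a (m+2) := by
      have ho : Odd (m+2) := by
        obtain ⟨k,hk⟩ := h; exact ⟨k+1, by omega⟩
      exact (between_odd a ho).2
    have hd := conv_diff2 a m
    rw [h.neg_one_pow, mul_neg_one, neg_div] at hd
    rw [abs_of_neg (by linarith)]
    linarith

lemma prefix_pq (a b : ℕ → ℕ+) (n : ℕ) (h : ∀ j < n, b j = a j) :
    ∀ k ≤ n, pnum b k = pnum a k ∧ qden b k = qden a k := by
  intro k hk
  induction k using Nat.strong_induction_on with
  | _ k ih =>
    match k, hk with
    | 0, _ => exact ⟨rfl, rfl⟩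
    | 1, hk => simp [pnum, qden, h 0 (by omega)]
    | (k+2), hk =>
      obtain ⟨ih1p, ih1q⟩ := ih (k+1) (by omega) (by omega)
      obtain ⟨ih0p, ih0q⟩ := ih k (by omega) (by omega)
      constructor
      · show (b (k+1) : ℕ) * pnum b (k+1) + pnum b k = (a (k+1) : ℕ) * pnum a (k+1) + pnum a k
        rw [h (k+1) (by omega), ih1p, ih0p]
      · show (b (k+1) : ℕ) * qden b (k+1) + qden b k = (a (k+1) : ℕ) * qden a (k+1) + qden a k
        rw [h (k+1) (by omega), ih1q, ih0q]


lemma q_succ_le (a : ℕ → ℕ+) (m : ℕ) : qden a (m+2) ≤ 2 * (a (m+1) : ℕ) * qden a (m+1) := by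
  show (a (m+1) : ℕ) * qden a (m+1) + qden a m ≤ _
  have h1 : qden a m ≤ qden a (m+1) := q_mono a m
  have h2 : qden a (m+1) ≤ (a (m+1) : ℕ) * qden a (m+1) := Nat.le_mul_of_pos_left _ (a (m+1)).pos
  have h3 : 2 * (a (m+1) : ℕ) * qden a (m+1)
      = (a (m+1) : ℕ) * qden a (m+1) + (a (m+1) : ℕ) * qden a (m+1) := by ring
  omega

lemma abs_lower2 (a : ℕ → ℕ+) (m : ℕ) :
    1 / (2 * ((qden a (m+1) : ℝ))^2) ≤ |cfVal a - conv a m| := by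
  refine le_trans ?_ (abs_lower a m)
  have hq2 : (qden a (m+2) : ℝ) ≤ 2 * (a (m+1) : ℝ) * qden a (m+1) := by
    exact_mod_cast q_succ_le a m
  have hm : (qden a m : ℝ) ≤ qden a (m+1) := by exact_mod_cast q_mono a m
  have h0 := qR_pos a m
  have h1 := qR_pos a (m+1)
  have h2 := qR_pos a (m+2)
  have ha : (0:ℝ) < (a (m+1) : ℝ) := by exact_mod_cast (a (m+1)).pos
  rw [div_le_div_iff₀ (by positivity) (by positivity)]
  calc 1 * ((qden a m : ℝ) * qden a (m+2)) ≤ (qden a (m+1) : ℝ) * (2 * (a (m+1):ℝ) * qden a (m+1)) := by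
        rw [one_mul]; exact mul_le_mul hm hq2 (le_of_lt h2) (le_of_lt h1)
    _ = (a (m+1) : ℝ) * (2 * (qden a (m+1):ℝ)^2) := by ring

lemma pnum_two (a : ℕ → ℕ+) (k : ℕ) :
    (pnum a (k+2) : ℝ) = (a (k+1) : ℝ) * pnum a (k+1) + pnum a k := by
  show (((a (k+1) : ℕ) * pnum a (k+1) + pnum a k : ℕ) : ℝ) = _
  push_cast; ring

lemma qden_two (a : ℕ → ℕ+) (k : ℕ) :
    (qden a (k+2) : ℝ) = (a (k+1) : ℝ) * qden a (k+1) + qden a k := by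
  show (((a (k+1) : ℕ) * qden a (k+1) + qden a k : ℕ) : ℝ) = _
  push_cast; ring

/-- The Möbius map whose values at integer points delimit the cylinders. -/
noncomputable def gmap (P Q P' Q' t : ℝ) : ℝ := (t * P + P') / (t * Q + Q')

lemma gmap_sub {P Q P' Q' e : ℝ} (t s : ℝ) (hdet : P * Q' - P' * Q = e)
    (d1 : 0 < t * Q + Q') (d2 : 0 < s * Q + Q') :
    gmap P Q P' Q' t - gmap P Q P' Q' s = (t - s) * e / ((t*Q+Q') * (s*Q+Q')) := by
  unfold gmap
  rw [div_sub_div _ _ d1.ne' d2.ne']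
  congr 1
  linear_combination (t - s) * hdet

/-- `g(a_{k+1}) = c_{k+2}`. -/
lemma gmap_conv (a : ℕ → ℕ+) (k : ℕ) :
    gmap (pnum a (k+1)) (qden a (k+1)) (pnum a k) (qden a k) ((a (k+1)):ℝ) = conv a (k+2) := by
  unfold gmap conv
  rw [pnum_two, qden_two]

/-- `c_{k+3}` versus the cylinder edge `g(a_{k+1}+1)`. -/
lemma cyl_edge (a : ℕ → ℕ+) (k : ℕ) :
    conv a (k+3) - gmap (pnum a (k+1)) (qden a (k+1)) (pnum a k) (qden a k) ((a (k+1):ℝ)+1)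
      = (1 - (a (k+2):ℝ)) * (-1)^k /
        ((qden a (k+3):ℝ) * (((a (k+1):ℝ)+1) * qden a (k+1) + qden a k)) := by
  unfold gmap
  have e1 : ((a (k+1):ℝ)+1) * pnum a (k+1) + pnum a k = (pnum a (k+2):ℝ) + pnum a (k+1) := by
    rw [pnum_two]; ring
  have e2 : ((a (k+1):ℝ)+1) * qden a (k+1) + qden a k = (qden a (k+2):ℝ) + qden a (k+1) := by
    rw [qden_two]; ring
  rw [e1, e2]
  have h1 : (pnum a (k+3) : ℝ) * qden a (k+2) - pnum a (k+2) * qden a (k+3) = (-1)^(k+2) := by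
    exact_mod_cast det a (k+2)
  have h2 : (pnum a (k+3) : ℝ) * qden a (k+1) - pnum a (k+1) * qden a (k+3)
      = (a (k+2) : ℝ) * (-1)^(k+1) := by exact_mod_cast det2 a (k+1)
  have d1 := qR_pos a (k+3)
  have d2 : (0:ℝ) < (qden a (k+2):ℝ) + qden a (k+1) := by
    have := qR_pos a (k+2); have := qR_pos a (k+1); linarith
  unfold conv
  rw [div_sub_div _ _ d1.ne' d2.ne']
  congr 1
  have hp2 : ((-1:ℝ))^(k+2) = (-1)^k := by ring
  have hp1 : ((-1:ℝ))^(k+1) = -(-1)^k := by ring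
  rw [hp2] at h1; rw [hp1] at h2
  linear_combination h1 + h2

set_option maxHeartbeats 2000000 in
lemma sep (a b : ℕ → ℕ+) (k : ℕ) (hpre : ∀ j < k+1, b j = a j) (hne : b (k+1) ≠ a (k+1)) :
    1 / (2 * ((qden a (k+4) : ℝ))^2) ≤ |cfVal a - cfVal b| := by
  obtain ⟨hpP, hpQ⟩ := prefix_pq a b (k+1) hpre (k+1) le_rfl
  obtain ⟨hpP', hpQ'⟩ := prefix_pq a b (k+1) hpre k (by omega)
  have hQ : (0:ℝ) < (qden a (k+1):ℝ) := qR_pos a (k+1)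
  have hQ' : (0:ℝ) < (qden a k : ℝ) := qR_pos a k
  have hdet : (pnum a (k+1):ℝ) * qden a k - (pnum a k : ℝ) * qden a (k+1) = (-1)^k := by
    exact_mod_cast det a k
  have hden : ∀ t : ℝ, 0 < t → 0 < t * (qden a (k+1):ℝ) + (qden a k:ℝ) := fun t ht => by positivity
  have hA : (0:ℝ) < (a (k+1):ℝ) := by exact_mod_cast (a (k+1)).pos
  have hB : (0:ℝ) < (b (k+1):ℝ) := by exact_mod_cast (b (k+1)).pos
  have hA2 : (1:ℝ) ≤ (a (k+2):ℝ) := by exact_mod_cast (a (k+2)).one_le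
  have hB2 : (1:ℝ) ≤ (b (k+2):ℝ) := by exact_mod_cast (b (k+2)).one_le
  have hga : gmap (pnum a (k+1):ℝ) (qden a (k+1):ℝ) (pnum a k:ℝ) (qden a k:ℝ) ((a (k+1)):ℝ) = conv a (k+2) := gmap_conv a k
  have hgb : gmap (pnum a (k+1):ℝ) (qden a (k+1):ℝ) (pnum a k:ℝ) (qden a k:ℝ) ((b (k+1)):ℝ) = conv b (k+2) := by
    have := gmap_conv b k
    rwa [hpP, hpQ, hpP', hpQ'] at this
  have hea := cyl_edge a k
  have heb := cyl_edge b k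
  rw [hpP, hpQ, hpP', hpQ'] at heb
  have hq3a := qR_pos a (k+3)
  have hq3b := qR_pos b (k+3)
  have hbound2 : 1 / (2 * ((qden a (k+4) : ℝ))^2) ≤ |cfVal a - conv a (k+3)| := abs_lower2 a (k+3)
  have hbound1 : 1 / (2 * ((qden a (k+4) : ℝ))^2) ≤ |cfVal a - conv a (k+2)| := by
    refine le_trans ?_ (abs_lower2 a (k+2))
    have h1 : (qden a (k+3):ℝ) ≤ qden a (k+4) := by exact_mod_cast q_mono a (k+3)
    have h2 := qR_pos a (k+3)
    gcongr
  have hneN : (b (k+1):ℕ) ≠ (a (k+1):ℕ) := fun h => hne (PNat.coe_injective h)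
  rcases Nat.even_or_odd k with hk | hk
  · -- k even
    have hsgn : ((-1:ℝ))^k = 1 := hk.neg_one_pow
    rw [hsgn] at hdet hea heb
    have hok1 : Odd (k+1) := hk.add_one
    have hok3 : Odd (k+3) := by rcases hk with ⟨j,hj⟩; exact ⟨j+1, by omega⟩
    have hx1 : conv a (k+2) < cfVal a := (between_odd a hok1).1
    have hx2 : cfVal a < conv a (k+3) := (between_odd a hok3).2
    have hy1 : conv b (k+2) < cfVal b := (between_odd b hok1).1
    have hy2 : cfVal b < conv b (k+3) := (between_odd b hok3).2
    rcases lt_or_gt_of_ne hneN with hlt | hgt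
    · have hcast : (b (k+1):ℝ) + 1 ≤ (a (k+1):ℝ) := by exact_mod_cast hlt
      have s2 : conv b (k+3) ≤ gmap (pnum a (k+1):ℝ) (qden a (k+1):ℝ) (pnum a k:ℝ) (qden a k:ℝ) ((b (k+1):ℝ)+1) := by
        have hnn : conv b (k+3) - gmap (pnum a (k+1):ℝ) (qden a (k+1):ℝ) (pnum a k:ℝ) (qden a k:ℝ) ((b (k+1):ℝ)+1) ≤ 0 := by
          rw [heb]
          apply div_nonpos_of_nonpos_of_nonneg (by nlinarith)
          have := hden ((b (k+1):ℝ)+1) (by linarith)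
          positivity
        linarith
      have s3 : gmap (pnum a (k+1):ℝ) (qden a (k+1):ℝ) (pnum a k:ℝ) (qden a k:ℝ) ((b (k+1):ℝ)+1) ≤ gmap (pnum a (k+1):ℝ) (qden a (k+1):ℝ) (pnum a k:ℝ) (qden a k:ℝ) ((a (k+1):ℝ)) := by
        have d1 := hden ((b (k+1):ℝ)+1) (by linarith)
        have d2 := hden ((a (k+1):ℝ)) hA
        have h := gmap_sub ((b (k+1):ℝ)+1) ((a (k+1):ℝ)) hdet d1 d2
        have : ((b (k+1):ℝ)+1 - (a (k+1):ℝ)) * 1 / (((b (k+1):ℝ)+1)*(qden a (k+1):ℝ)+(qden a k:ℝ)) / ((a (k+1):ℝ)*(qden a (k+1):ℝ)+(qden a k:ℝ)) ≤ 0 := by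
          apply div_nonpos_of_nonpos_of_nonneg _ (le_of_lt d2)
          apply div_nonpos_of_nonpos_of_nonneg (by linarith) (le_of_lt d1)
        rw [div_div] at this
        linarith [h, this]
      have hyx : cfVal b < conv a (k+2) := by
        rw [← hga]; exact lt_of_lt_of_le hy2 (le_trans s2 s3)
      have : cfVal a - conv a (k+2) ≤ |cfVal a - cfVal b| := by
        rw [abs_of_pos (by linarith)]; linarith
      rw [abs_of_pos (by linarith)] at hbound1
      linarith
    · have hcast : (a (k+1):ℝ) + 1 ≤ (b (k+1):ℝ) := by exact_mod_cast hgt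
      have s2 : conv a (k+3) ≤ gmap (pnum a (k+1):ℝ) (qden a (k+1):ℝ) (pnum a k:ℝ) (qden a k:ℝ) ((a (k+1):ℝ)+1) := by
        have hnn : conv a (k+3) - gmap (pnum a (k+1):ℝ) (qden a (k+1):ℝ) (pnum a k:ℝ) (qden a k:ℝ) ((a (k+1):ℝ)+1) ≤ 0 := by
          rw [hea]
          apply div_nonpos_of_nonpos_of_nonneg (by nlinarith)
          have := hden ((a (k+1):ℝ)+1) (by linarith)
          positivity
        linarith
      have s3 : gmap (pnum a (k+1):ℝ) (qden a (k+1):ℝ) (pnum a k:ℝ) (qden a k:ℝ) ((a (k+1):ℝ)+1) ≤ gmap (pnum a (k+1):ℝ) (qden a (k+1):ℝ) (pnum a k:ℝ) (qden a k:ℝ) ((b (k+1):ℝ)) := by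
        have d1 := hden ((a (k+1):ℝ)+1) (by linarith)
        have d2 := hden ((b (k+1):ℝ)) hB
        have h := gmap_sub ((a (k+1):ℝ)+1) ((b (k+1):ℝ)) hdet d1 d2
        have : ((a (k+1):ℝ)+1 - (b (k+1):ℝ)) * 1 /   ((((a (k+1):ℝ)+1)*(qden a (k+1):ℝ)+(qden a k:ℝ)) * ((b (k+1):ℝ)*(qden a (k+1):ℝ)+(qden a k:ℝ))) ≤ 0 := by
          apply div_nonpos_of_nonpos_of_nonneg (by linarith) (le_of_lt (mul_pos d1 d2))
        linarith [h, this]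
      have hxy : conv a (k+3) < cfVal b := by
        calc conv a (k+3) ≤ gmap (pnum a (k+1):ℝ) (qden a (k+1):ℝ) (pnum a k:ℝ) (qden a k:ℝ) ((b (k+1):ℝ)) := le_trans s2 s3
          _ = conv b (k+2) := hgb
          _ < cfVal b := hy1
      have : conv a (k+3) - cfVal a ≤ |cfVal a - cfVal b| := by
        rw [abs_of_neg (by linarith : cfVal a - cfVal b < 0)]; linarith
      rw [abs_of_neg (by linarith : cfVal a - conv a (k+3) < 0)] at hbound2
      linarith
  · -- k odd
    have hsgn : ((-1:ℝ))^k = -1 := hk.neg_one_pow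
    rw [hsgn] at hdet hea heb
    have hek1 : Even (k+1) := by rcases hk with ⟨j,hj⟩; exact ⟨j+1, by omega⟩
    have hek3 : Even (k+3) := by rcases hk with ⟨j,hj⟩; exact ⟨j+2, by omega⟩
    have hx1 : cfVal a < conv a (k+2) := (between_even a hek1).2
    have hx2 : conv a (k+3) < cfVal a := (between_even a hek3).1
    have hy1 : cfVal b < conv b (k+2) := (between_even b hek1).2
    have hy2 : conv b (k+3) < cfVal b := (between_even b hek3).1
    rcases lt_or_gt_of_ne hneN with hlt | hgt
    · have hcast : (b (k+1):ℝ) + 1 ≤ (a (k+1):ℝ) := by exact_mod_cast hlt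
      have s2 : gmap (pnum a (k+1):ℝ) (qden a (k+1):ℝ) (pnum a k:ℝ) (qden a k:ℝ) ((b (k+1):ℝ)+1) ≤ conv b (k+3) := by
        have hnn : 0 ≤ conv b (k+3) - gmap (pnum a (k+1):ℝ) (qden a (k+1):ℝ) (pnum a k:ℝ) (qden a k:ℝ) ((b (k+1):ℝ)+1) := by
          rw [heb]
          apply div_nonneg (by nlinarith)
          have := hden ((b (k+1):ℝ)+1) (by linarith)
          positivity
        linarith
      have s3 : gmap (pnum a (k+1):ℝ) (qden a (k+1):ℝ) (pnum a k:ℝ) (qden a k:ℝ) ((a (k+1):ℝ)) ≤ gmap (pnum a (k+1):ℝ) (qden a (k+1):ℝ) (pnum a k:ℝ) (qden a k:ℝ) ((b (k+1):ℝ)+1) := by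
        have d1 := hden ((b (k+1):ℝ)+1) (by linarith)
        have d2 := hden ((a (k+1):ℝ)) hA
        have h := gmap_sub ((b (k+1):ℝ)+1) ((a (k+1):ℝ)) hdet d1 d2
        have : 0 ≤ ((b (k+1):ℝ)+1 - (a (k+1):ℝ)) * (-1) / ((((b (k+1):ℝ)+1)*(qden a (k+1):ℝ)+(qden a k:ℝ)) * ((a (k+1):ℝ)*(qden a (k+1):ℝ)+(qden a k:ℝ))) := by
          apply div_nonneg (by nlinarith) (le_of_lt (mul_pos d1 d2))
        linarith [h, this]
      have hxy : conv a (k+2) < cfVal b := by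
        calc conv a (k+2) = gmap (pnum a (k+1):ℝ) (qden a (k+1):ℝ) (pnum a k:ℝ) (qden a k:ℝ) ((a (k+1)):ℝ) := hga.symm
          _ ≤ gmap (pnum a (k+1):ℝ) (qden a (k+1):ℝ) (pnum a k:ℝ) (qden a k:ℝ) ((b (k+1):ℝ)+1) := s3
          _ ≤ conv b (k+3) := s2
          _ < cfVal b := hy2
      have : conv a (k+2) - cfVal a ≤ |cfVal a - cfVal b| := by
        rw [abs_of_neg (by linarith : cfVal a - cfVal b < 0)]; linarith
      rw [abs_of_neg (by linarith : cfVal a - conv a (k+2) < 0)] at hbound1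
      linarith
    · have hcast : (a (k+1):ℝ) + 1 ≤ (b (k+1):ℝ) := by exact_mod_cast hgt
      have s2 : gmap (pnum a (k+1):ℝ) (qden a (k+1):ℝ) (pnum a k:ℝ) (qden a k:ℝ) ((a (k+1):ℝ)+1) ≤ conv a (k+3) := by
        have hnn : 0 ≤ conv a (k+3) - gmap (pnum a (k+1):ℝ) (qden a (k+1):ℝ) (pnum a k:ℝ) (qden a k:ℝ) ((a (k+1):ℝ)+1) := by
          rw [hea]
          apply div_nonneg (by nlinarith)
          have := hden ((a (k+1):ℝ)+1) (by linarith)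
          positivity
        linarith
      have s3 : gmap (pnum a (k+1):ℝ) (qden a (k+1):ℝ) (pnum a k:ℝ) (qden a k:ℝ) ((b (k+1):ℝ)) ≤ gmap (pnum a (k+1):ℝ) (qden a (k+1):ℝ) (pnum a k:ℝ) (qden a k:ℝ) ((a (k+1):ℝ)+1) := by
        have d1 := hden ((b (k+1):ℝ)) hB
        have d2 := hden ((a (k+1):ℝ)+1) (by linarith)
        have h := gmap_sub ((b (k+1):ℝ)) ((a (k+1):ℝ)+1) hdet d1 d2
        have : ((b (k+1):ℝ) - ((a (k+1):ℝ)+1)) * (-1) / (((b (k+1):ℝ)*(qden a (k+1):ℝ)+(qden a k:ℝ)) * ((((a (k+1):ℝ)+1))*(qden a (k+1):ℝ)+(qden a k:ℝ))) ≤ 0 := by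
          apply div_nonpos_of_nonpos_of_nonneg (by nlinarith) (le_of_lt (mul_pos d1 d2))
        linarith [h, this]
      have hxy : cfVal b < conv a (k+3) := by
        calc cfVal b < conv b (k+2) := hy1
          _ = gmap (pnum a (k+1):ℝ) (qden a (k+1):ℝ) (pnum a k:ℝ) (qden a k:ℝ) ((b (k+1)):ℝ) := hgb.symm
          _ ≤ gmap (pnum a (k+1):ℝ) (qden a (k+1):ℝ) (pnum a k:ℝ) (qden a k:ℝ) ((a (k+1):ℝ)+1) := s3
          _ ≤ conv a (k+3) := s2
      have : cfVal a - conv a (k+3) ≤ |cfVal a - cfVal b| := by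
        rw [abs_of_pos (by linarith : 0 < cfVal a - cfVal b)]; linarith
      rw [abs_of_pos (by linarith : 0 < cfVal a - conv a (k+3))] at hbound2
      linarith

lemma cyl_upper (a b : ℕ → ℕ+) (n : ℕ) (hpre : ∀ j < n, b j = a j) :
    |cfVal a - cfVal b| ≤ 1 / ((qden a n : ℝ))^2 := by
  obtain ⟨hpP, hpQ⟩ := prefix_pq a b n hpre n le_rfl
  have hconv : conv b n = conv a n := by unfold conv; rw [hpP, hpQ]
  have hx := abs_upper a n
  have hy := abs_upper b n
  rw [hconv] at hy
  have hq := qR_pos a n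
  have hqb := qR_pos b n
  have hBa : 1/((qden a n:ℝ) * qden a (n+1)) ≤ 1/((qden a n:ℝ))^2 := by
    rw [sq]
    gcongr
    exact_mod_cast q_mono a n
  have hBb : 1/((qden b n:ℝ) * qden b (n+1)) ≤ 1/((qden a n:ℝ))^2 := by
    rw [sq, hpQ]
    gcongr
    have : qden a n ≤ qden b (n+1) := by rw [← hpQ]; exact q_mono b n
    exact_mod_cast this
  have hxu : |cfVal a - conv a n| ≤ 1/((qden a n:ℝ))^2 := le_trans hx hBa
  have hyu : |cfVal b - conv a n| ≤ 1/((qden a n:ℝ))^2 := le_trans hy hBb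
  rcases Nat.even_or_odd n with h|h
  · have hxa := (between_even a h).1
    have hyb := (between_even b h).1
    rw [hconv] at hyb
    rw [abs_sub_le_iff]
    constructor
    · linarith [le_abs_self (cfVal a - conv a n)]
    · linarith [le_abs_self (cfVal b - conv a n)]
  · have hxa := (between_odd a h).2
    have hyb := (between_odd b h).2
    rw [hconv] at hyb
    rw [abs_sub_le_iff]
    constructor
    · linarith [neg_abs_le (cfVal b - conv a n)]
    · linarith [neg_abs_le (cfVal a - conv a n)]

lemma val_lt_of_lt (a b : ℕ → ℕ+) (h : (a 0 : ℕ) < (b 0 : ℕ)) : cfVal b < cfVal a := by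
  have hxb : cfVal b < conv b 1 := (between_odd b odd_one).2
  have hxa2 : conv a 2 < cfVal a := by
    have : (2:ℕ) = 2*1 := by norm_num
    rw [this]; exact conv_even_lt a 1
  have e1 : conv b 1 = 1/((b 0:ℕ):ℝ) := by
    unfold conv
    norm_num [pnum, qden]
  have hb0 : (0:ℝ) < ((b 0:ℕ):ℝ) := by exact_mod_cast (b 0).pos
  have ha1 : (0:ℝ) < ((a 1:ℕ):ℝ) := by exact_mod_cast (a 1).pos
  have e2 : conv a 2 = ((a 1:ℕ):ℝ)/((a 1:ℕ) * (a 0:ℕ) + 1 : ℕ) := by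
    unfold conv
    norm_num [pnum, qden]
  have hkey : (1:ℝ)/((b 0:ℕ):ℝ) ≤ conv a 2 := by
    rw [e2, div_le_div_iff₀ hb0 (by positivity)]
    have hcross : ((a 1:ℕ) * (a 0:ℕ) + 1 : ℕ) ≤ (a 1:ℕ) * (b 0:ℕ) := by
      have h1 : (a 0:ℕ) + 1 ≤ (b 0:ℕ) := h
      have := (a 1).pos
      calc (a 1:ℕ) * (a 0:ℕ) + 1 ≤ (a 1:ℕ) * (a 0:ℕ) + (a 1:ℕ) := by omega
        _ = (a 1:ℕ) * ((a 0:ℕ) + 1) := by ring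
        _ ≤ (a 1:ℕ) * (b 0:ℕ) := Nat.mul_le_mul_left _ h1
    have : (((a 1:ℕ) * (a 0:ℕ) + 1 : ℕ):ℝ) ≤ ((a 1:ℕ):ℝ) * ((b 0:ℕ):ℝ) := by
      exact_mod_cast hcross
    linarith
  rw [e1] at hxb
  linarith

lemma cfVal_inj : Function.Injective cfVal := by
  intro a b h
  by_contra hne
  have hex : ∃ m, a m ≠ b m := by
    by_contra h'
    push_neg at h'
    exact hne (funext h')
  have hspec := Nat.find_spec hex
  have hmin := fun j (hj : j < Nat.find hex) => Nat.find_min hex hj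
  set m := Nat.find hex with hm
  match hm' : m, hspec, hmin with
  | 0, hspec, hmin =>
    rcases lt_trichotomy ((a 0 : ℕ)) ((b 0 : ℕ)) with hlt|heq|hgt
    · have := val_lt_of_lt a b hlt; rw [h] at this; exact lt_irrefl _ this
    · exact hspec (PNat.coe_injective heq)
    · have := val_lt_of_lt b a hgt; rw [h] at this; exact lt_irrefl _ this
  | (k+1), hspec, hmin =>
    have hpre : ∀ j < k+1, b j = a j := by
      intro j hj
      have := hmin j (by omega)
      push_neg at this
      exact this.symm
    have hne' : b (k+1) ≠ a (k+1) := fun hh => hspec hh.symm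
    have hsep := sep a b k hpre hne'
    rw [h, sub_self, abs_zero] at hsep
    have : (0:ℝ) < 1 / (2 * ((qden a (k+4) : ℝ))^2) := by
      have := qR_pos a (k+4); positivity
    linarith

lemma sum_log_le_log_qden (a : ℕ → ℕ+) (n : ℕ) :
    ∑ j ∈ range n, Real.log ((a j : ℕ) : ℝ) ≤ Real.log (qden a n : ℝ) := by
  have hposj : ∀ j ∈ range n, ((a j : ℕ) : ℝ) ≠ 0 := by
    intro j _
    have : (0:ℝ) < ((a j : ℕ) : ℝ) := by exact_mod_cast (a j).pos
    exact this.ne'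
  rw [← Real.log_prod hposj]
  apply Real.log_le_log
  · apply Finset.prod_pos
    intro j _
    exact_mod_cast (a j).pos
  · have := prod_le_q a n
    calc (∏ j ∈ range n, ((a j:ℕ):ℝ)) = ((∏ j ∈ range n, (a j : ℕ) : ℕ) : ℝ) := by push_cast; rfl
      _ ≤ _ := by exact_mod_cast this

lemma log_qden_le_sum_log (a : ℕ → ℕ+) (n : ℕ) :
    Real.log (qden a n : ℝ) ≤ ∑ j ∈ range n, Real.log (((a j : ℕ) : ℝ) + 1) := by
  have h : (qden a n : ℝ) ≤ ∏ j ∈ range n, (((a j:ℕ):ℝ)+1) := by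
    have := q_le_prod a n
    calc (qden a n:ℝ) ≤ ((∏ j ∈ range n, ((a j : ℕ)+1) : ℕ) : ℝ) := by exact_mod_cast this
      _ = _ := by push_cast; rfl
  calc Real.log (qden a n : ℝ) ≤ Real.log (∏ j ∈ range n, (((a j:ℕ):ℝ)+1)) :=
        Real.log_le_log (qR_pos a n) h
    _ = _ := Real.log_prod (fun j _ => by positivity)

lemma log_abs_le (a : ℕ → ℕ+) (u : ℝ) (n : ℕ) (hu : 0 < u) (h : u ≤ 1/(qden a n:ℝ)^2) :
    Real.log u ≤ -(2 * Real.log (qden a n : ℝ)) := by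
  have h2 := Real.log_le_log hu h
  rwa [one_div, Real.log_inv, Real.log_pow, Nat.cast_ofNat] at h2

lemma log_abs_ge (a : ℕ → ℕ+) (u : ℝ) (n : ℕ) (h : 1/(2*(qden a n:ℝ)^2) ≤ u) :
    -(Real.log 2 + 2 * Real.log (qden a n : ℝ)) ≤ Real.log u := by
  have hq := qR_pos a n
  have h2 := Real.log_le_log (by positivity) h
  rwa [one_div, Real.log_inv, Real.log_mul (by norm_num) (by positivity),
    Real.log_pow, Nat.cast_ofNat] at h2

end CFAux

namespace CFAux

lemma coeff_eq {a : ℕ → ℕ+} {x : ℝ} (h : cfVal a = x) : coeff x = a := by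
  have hex : ∃ c : ℕ → ℕ+, cfVal c = x := ⟨a, h⟩
  have h2 : coeff x = hex.choose := by
    unfold coeff
    rw [dif_pos hex]
  rw [h2]
  exact cfVal_inj (hex.choose_spec.trans h.symm)

lemma ratio_low (nn SA T c1 lv lu : ℝ) (hn : 0 < nn) (h1 : 2*SA ≤ -lv)
    (h2 : -lu ≤ 2*(T+c1)) (h3 : lu < 0) (h4 : 0 ≤ SA) (h5 : 0 < T + c1) :
    ((1/nn)*SA)/((1/nn)*T + c1/nn) ≤ lv/lu := by
  have he : lv/lu = (-lv)/(-lu) := (neg_div_neg_eq _ _).symm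
  have heq : ((1/nn)*SA)/((1/nn)*T + c1/nn) = SA/(T+c1) := by
    rw [show (1/nn)*SA = SA/nn from by ring, show (1/nn)*T + c1/nn = (T+c1)/nn from by ring]
    rw [div_div_div_cancel_right₀]
    exact hn.ne'
  rw [he, heq, div_le_div_iff₀ h5 (by linarith : (0:ℝ) < -lu)]
  nlinarith [mul_le_mul_of_nonneg_left h2 h4, mul_le_mul_of_nonneg_right h1 (le_of_lt h5)]

lemma ratio_up (nn TA c2 S lv lu : ℝ) (hn : 0 < nn) (hS : 0 < S)
    (h1 : -lv ≤ 2*(TA+c2)) (h2 : 2*S ≤ -lu) (h4 : 0 ≤ -lv) (h5 : 0 < TA + c2) :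
    lv/lu ≤ ((1/nn)*TA + c2/nn)/((1/nn)*S) := by
  have he : lv/lu = (-lv)/(-lu) := (neg_div_neg_eq _ _).symm
  have heq : ((1/nn)*TA + c2/nn)/((1/nn)*S) = (TA+c2)/S := by
    rw [show (1/nn)*TA + c2/nn = (TA+c2)/nn from by ring, show (1/nn)*S = S/nn from by ring]
    rw [div_div_div_cancel_right₀]
    exact hn.ne'
  rw [he, heq, div_le_div_iff₀ (by linarith : (0:ℝ) < -lu) hS]
  nlinarith [mul_le_mul_of_nonneg_right h1 (le_of_lt hS), mul_le_mul_of_nonneg_left h2 h4]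

end CFAux

set_option maxHeartbeats 1000000 in
/-- Hölder-type two-sided bound for `f₂` (Theorem 11 of the paper): for `x ∈ I` with
partial quotients `a` (0-indexed: `a j = a_{j+1}`), `n ≥ 3` odd with
`∑_{j=1}^n log a_j > 0`, and `y ∈ I_n(x) \\ I_{n+1}(x)`,
the ratio `log|f₂(x)−f₂(y)| / log|x−y|` is bounded below and above as stated.
Since `n` is odd, `⌊n/2⌋ = n/2` (ℕ-division), `2⌊n/2⌋+4 = n+3` and `2⌊n/2⌋+6 = n+5`;
1-indexed coefficients `a_{2j}, a_{n+2}, a_{n+3}, a_{n+5}` are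
`a (2j-1), a (n+1), a (n+2), a (n+4)`. -/
theorem holder_ratio_bounds_cantorF2 (a : ℕ → ℕ+) (x : ℝ) (hx : x ∈ Iirr)
    (hxa : cfVal a = x) (n : ℕ) (hn : 3 ≤ n) (hno : Odd n)
    (hpos : 0 < ∑ j ∈ Finset.range n, Real.log (a j)) (y : ℝ)
    (hy : y ∈ fundInt a n \ fundInt a (n+1)) :
    ((1 / (n:ℝ)) * ∑ j ∈ Finset.range (n / 2), Real.log (a (2*j+1))) /
        ((1 / (n:ℝ)) * ∑ j ∈ Finset.range (n+3), Real.log ((a j : ℝ) + 1) +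
          (Real.log 2 / 2 +
            Real.log (max (((a (n+1) : ℝ) + 2) / ((a (n+1) : ℝ) + 1))
              (((a (n+2) : ℝ) + 2) / ((a (n+2) : ℝ) + 1)))) / (n:ℝ)) ≤
      Real.log |cantorF2 x - cantorF2 y| / Real.log |x - y| ∧
    Real.log |cantorF2 x - cantorF2 y| / Real.log |x - y| ≤
      ((1 / (n:ℝ)) * ∑ j ∈ Finset.range (n / 2 + 3), Real.log ((a (2*j+1) : ℝ) + 1) +
          (Real.log 2 / 2 +
            Real.log (max (((a (n+2) : ℝ) + 2) / ((a (n+2) : ℝ) + 1))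
              (((a (n+4) : ℝ) + 2) / ((a (n+4) : ℝ) + 1)))) / (n:ℝ)) /
        ((1 / (n:ℝ)) * ∑ j ∈ Finset.range n, Real.log (a j)) := by
  classical
  obtain ⟨hyI, hyN⟩ := hy
  obtain ⟨b, hb, hpre⟩ := hyI
  have hbn : b n ≠ a n := by
    intro hbe
    exact hyN ⟨b, hb, fun j hj => by
      rcases Nat.lt_succ_iff_lt_or_eq.mp hj with h'|h'
      · exact hpre j h'
      · rw [h']; exact hbe⟩
  obtain ⟨m, hm0⟩ := hno
  have hm' : n = 2*m+1 := by omega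
  obtain ⟨l, hl⟩ : ∃ l, m = l+1 := ⟨m-1, by omega⟩
  have hdiv : n/2 = l+1 := by omega
  have hdiv3 : n/2 + 3 = l+4 := by omega
  have hca : coeff x = a := CFAux.coeff_eq hxa
  have hcb : coeff y = b := CFAux.coeff_eq hb
  have hf2x : cantorF2 x = cfVal (fun j => a (2*j+1)) := by unfold cantorF2; rw [hca]
  have hf2y : cantorF2 y = cfVal (fun j => b (2*j+1)) := by unfold cantorF2; rw [hcb]
  -- bounds on |x - y|
  have hu1 : |x - y| ≤ 1/((qden a n:ℝ))^2 := by
    rw [← hxa, ← hb]; exact CFAux.cyl_upper a b n hpre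
  have hu2 : 1/(2*((qden a (n+3):ℝ))^2) ≤ |x - y| := by
    have h := CFAux.sep a b (2*l+2) (fun j hj => hpre j (by omega)) (by
      have e : 2*l+2+1 = n := by omega
      rw [e]; exact hbn)
    have e2 : 2*l+2+4 = n+3 := by omega
    rw [e2, hxa, hb] at h
    exact h
  -- bounds on |f2 x - f2 y|
  have hvpre : ∀ j < l+1, (fun j => b (2*j+1)) j = (fun j => a (2*j+1)) j :=
    fun j hj => hpre (2*j+1) (by omega)
  have hv1 : |cfVal (fun j => a (2*j+1)) - cfVal (fun j => b (2*j+1))|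
      ≤ 1/((qden (fun j => a (2*j+1)) (l+1):ℝ))^2 :=
    CFAux.cyl_upper _ _ (l+1) hvpre
  have hv2 : 1/(2*((qden (fun j => a (2*j+1)) (l+4):ℝ))^2)
      ≤ |cfVal (fun j => a (2*j+1)) - cfVal (fun j => b (2*j+1))| := by
    apply CFAux.sep _ _ l hvpre
    show b (2*(l+1)+1) ≠ a (2*(l+1)+1)
    have e : 2*(l+1)+1 = n := by omega
    rw [e]; exact hbn
  have hq3 := CFAux.qR_pos a (n+3)
  have hQ4 := CFAux.qR_pos (fun j => a (2*j+1)) (l+4)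
  have hupos : 0 < |x - y| := lt_of_lt_of_le (by positivity) hu2
  have hvpos : 0 < |cfVal (fun j => a (2*j+1)) - cfVal (fun j => b (2*j+1))| :=
    lt_of_lt_of_le (by positivity) hv2
  -- logs
  have hLu1 : Real.log |x - y| ≤ -(2 * Real.log (qden a n : ℝ)) :=
    CFAux.log_abs_le a _ n hupos hu1
  have hLu2 : -(Real.log 2 + 2 * Real.log (qden a (n+3) : ℝ)) ≤ Real.log |x - y| :=
    CFAux.log_abs_ge a _ (n+3) hu2
  have hLv1 : Real.log |cfVal (fun j => a (2*j+1)) - cfVal (fun j => b (2*j+1))|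
      ≤ -(2 * Real.log (qden (fun j => a (2*j+1)) (l+1) : ℝ)) :=
    CFAux.log_abs_le _ _ (l+1) hvpos hv1
  have hLv2 : -(Real.log 2 + 2 * Real.log (qden (fun j => a (2*j+1)) (l+4) : ℝ))
      ≤ Real.log |cfVal (fun j => a (2*j+1)) - cfVal (fun j => b (2*j+1))| :=
    CFAux.log_abs_ge _ _ (l+4) hv2
  -- sums vs logs of qden
  have hS : ∑ j ∈ Finset.range n, Real.log ((a j:ℕ):ℝ) ≤ Real.log (qden a n : ℝ) :=
    CFAux.sum_log_le_log_qden a n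
  have hT : Real.log (qden a (n+3) : ℝ) ≤ ∑ j ∈ Finset.range (n+3), Real.log (((a j:ℕ):ℝ)+1) :=
    CFAux.log_qden_le_sum_log a (n+3)
  have hSA : ∑ j ∈ Finset.range (l+1), Real.log ((a (2*j+1):ℕ):ℝ)
      ≤ Real.log (qden (fun j => a (2*j+1)) (l+1) : ℝ) := by
    simpa using CFAux.sum_log_le_log_qden (fun j => a (2*j+1)) (l+1)
  have hTA : Real.log (qden (fun j => a (2*j+1)) (l+4) : ℝ)
      ≤ ∑ j ∈ Finset.range (l+4), Real.log (((a (2*j+1):ℕ):ℝ)+1) := by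
    simpa using CFAux.log_qden_le_sum_log (fun j => a (2*j+1)) (l+4)
  -- nonnegativity facts
  have hSA0 : 0 ≤ ∑ j ∈ Finset.range (l+1), Real.log ((a (2*j+1):ℕ):ℝ) :=
    Finset.sum_nonneg fun j _ => Real.log_nonneg (by exact_mod_cast (a (2*j+1)).one_le)
  have hT0 : 0 ≤ ∑ j ∈ Finset.range (n+3), Real.log (((a j:ℕ):ℝ)+1) :=
    Finset.sum_nonneg fun j _ => Real.log_nonneg (by
      have : (0:ℝ) ≤ ((a j:ℕ):ℝ) := by positivity
      linarith)
  have hTA0 : 0 ≤ ∑ j ∈ Finset.range (l+4), Real.log (((a (2*j+1):ℕ):ℝ)+1) :=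
    Finset.sum_nonneg fun j _ => Real.log_nonneg (by
      have : (0:ℝ) ≤ ((a (2*j+1):ℕ):ℝ) := by positivity
      linarith)
  have hlog2 : 0 < Real.log 2 := Real.log_pos (by norm_num)
  have hmax1 : 0 ≤ Real.log (max (((a (n+1) : ℝ) + 2) / ((a (n+1) : ℝ) + 1))
      (((a (n+2) : ℝ) + 2) / ((a (n+2) : ℝ) + 1))) := by
    apply Real.log_nonneg
    have h0 : (0:ℝ) ≤ ((a (n+1):ℕ):ℝ) := by positivity
    have : (1:ℝ) ≤ (((a (n+1):ℕ):ℝ) + 2)/(((a (n+1):ℕ):ℝ) + 1) := by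
      rw [le_div_iff₀ (by linarith)]; linarith
    exact le_trans this (le_max_left _ _)
  have hmax2 : 0 ≤ Real.log (max (((a (n+2) : ℝ) + 2) / ((a (n+2) : ℝ) + 1))
      (((a (n+4) : ℝ) + 2) / ((a (n+4) : ℝ) + 1))) := by
    apply Real.log_nonneg
    have h0 : (0:ℝ) ≤ ((a (n+2):ℕ):ℝ) := by positivity
    have : (1:ℝ) ≤ (((a (n+2):ℕ):ℝ) + 2)/(((a (n+2):ℕ):ℝ) + 1) := by
      rw [le_div_iff₀ (by linarith)]; linarith
    exact le_trans this (le_max_left _ _)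
  have hn0 : (0:ℝ) < (n:ℝ) := by exact_mod_cast (by omega : 0 < n)
  rw [hf2x, hf2y, hdiv3, hdiv]
  constructor
  · apply CFAux.ratio_low _ _ _ _ _ _ hn0
    · linarith
    · linarith
    · linarith
    · exact hSA0
    · linarith
  · apply CFAux.ratio_up _ _ _ _ _ _ hn0
    · exact hpos
    · linarith
    · linarith
    · linarith
    · linarith
end
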